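/- arXiv:math/0701414 — 2 statements merged into one kernel-verified Lean document; each statement's English description precedes it below -/
import Mathlib

section
/- (Corollary 1.6, claim (1.47)) Let d ≥ 3, c_0 > 0, and let N ≥ 2 be large enough so that (ℤ/Nℤ)^d has ℓ^∞-diameter bigger than c_0 log N. Then for any j ∈ ℤ and t ≥ 0, on the event G_{j,t} = V_{c_0,j,t} ∩ U_{c_0,j,t}, for every 0 ≤ n ≤ D^j_t, all segments of length L_0 := ⌊c_0 log N⌋ contained in C_j \ X_{[0,n]} belong to the same connected component of C_j \ X_{[0,n]}. -/
open MeasureTheory Filter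
open scoped ENNReal Classical

namespace DiscCyl

/-- The lattice `ℤ^{d+1}`. -/
abbrev Lat (d : ℕ) := Fin (d + 1) → ℤ

/-- The discrete cylinder `E = (ℤ/Nℤ)^d × ℤ`. -/
abbrev Cyl (d N : ℕ) := (Fin d → ZMod N) × ℤ

instance (N : ℕ) : MeasurableSpace (ZMod N) := ⊤

instance (N : ℕ) : Countable (ZMod N) := by
  cases N with
  | zero => exact inferInstanceAs (Countable ℤ)
  | succ n => exact inferInstanceAs (Countable (Fin (n + 1)))

/-- The canonical projection `π_E : ℤ^{d+1} → E`. -/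
def projE (d N : ℕ) (v : Lat d) : Cyl d N :=
  (fun i => (v i.castSucc : ZMod N), v (Fin.last d))

/-- The `2(d+1)` unit vectors `±e_i` of `ℤ^{d+1}`. -/
def unitVecs (d : ℕ) : Finset (Lat d) :=
  Finset.image (fun p : Fin (d + 1) × Bool => Pi.single p.1 (if p.2 then (1 : ℤ) else -1))
    Finset.univ

/-- One-step transition probability of simple random walk on the cylinder:
each of the `2(d+1)` unit moves of `ℤ^{d+1}` is taken with probability `1/(2(d+1))`
and projected to `E`. -/
noncomputable def stepProb (d N : ℕ) (x y : Cyl d N) : ℝ≥0∞ :=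
  (((unitVecs d).filter fun e => x + projE d N e = y).card : ℝ≥0∞) / (2 * (d + 1))

/-- `Pl` is the family of laws (indexed by the starting point) of simple random walk
on the cylinder `E = (ℤ/Nℤ)^d × ℤ`. -/
def IsCylRW (d N : ℕ) (Pl : Cyl d N → Measure (ℕ → Cyl d N)) : Prop :=
  (∀ x, IsProbabilityMeasure (Pl x)) ∧
    ∀ (x : Cyl d N) (n : ℕ) (γ : ℕ → Cyl d N),
      Pl x {ω | ∀ i ≤ n, ω i = γ i} =
        (if γ 0 = x then 1 else 0) * ∏ i ∈ Finset.range n, stepProb d N (γ i) (γ (i + 1))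

/-- The lattice `ℤ^ν`. -/
abbrev ZLat (ν : ℕ) := Fin ν → ℤ

/-- Unit vectors of `ℤ^ν`. -/
def zUnitVecs (ν : ℕ) : Set (ZLat ν) :=
  {v | ∃ i, v = Pi.single i 1 ∨ v = Pi.single i (-1)}

/-- One-step transition probability of simple random walk on `ℤ^ν`. -/
noncomputable def zStep (ν : ℕ) (x y : ZLat ν) : ℝ≥0∞ :=
  if y - x ∈ zUnitVecs ν then (2 * ν : ℝ≥0∞)⁻¹ else 0

/-- `Ql` is the family of laws of simple random walk on `ℤ^ν`. -/
def IsLatRW (ν : ℕ) (Ql : ZLat ν → Measure (ℕ → ZLat ν)) : Prop :=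
  (∀ x, IsProbabilityMeasure (Ql x)) ∧
    ∀ (x : ZLat ν) (n : ℕ) (γ : ℕ → ZLat ν),
      Ql x {ω | ∀ i ≤ n, ω i = γ i} =
        (if γ 0 = x then 1 else 0) * ∏ i ∈ Finset.range n, zStep ν (γ i) (γ (i + 1))

/-- `q(ν)`: the return probability to the origin of simple random walk on `ℤ^ν`. -/
noncomputable def retProb (ν : ℕ) (Ql : ZLat ν → Measure (ℕ → ZLat ν)) : ℝ :=
  ((Ql 0) {ω | ∃ n : ℕ, 1 ≤ n ∧ ω n = 0}).toReal

/-- Entrance time `H_U` (with value `⊤` if `U` is never entered). -/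
noncomputable def entT {X : Type*} (U : Set X) (ω : ℕ → X) : ℕ∞ :=
  sInf {t : ℕ∞ | ∃ n : ℕ, ω n ∈ U ∧ t = n}

/-- Exit time `T_U`. -/
noncomputable def exitT {X : Type*} (U : Set X) (ω : ℕ → X) : ℕ∞ :=
  entT Uᶜ ω

/-- `after t f ω = t + f (θ_t ω)`, with value `⊤` when `t = ⊤`. -/
noncomputable def after {X : Type*} (t : ℕ∞) (f : (ℕ → X) → ℕ∞) (ω : ℕ → X) : ℕ∞ :=
  t.recTopCoe ⊤ fun m => (m : ℕ∞) + f fun k => ω (k + m)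

/-- The block `C_j = (ℤ/Nℤ)^d × ([(j-3/4)N, (j+3/4)N] ∩ ℤ)`. -/
def Cblk (d N : ℕ) (j : ℤ) : Set (Cyl d N) :=
  {x | ((j : ℝ) - 3 / 4) * N ≤ (x.2 : ℝ) ∧ (x.2 : ℝ) ≤ ((j : ℝ) + 3 / 4) * N}

/-- The block `B_j = (ℤ/Nℤ)^d × [(j-1)N, (j+1)N]`. -/
def Bblk (d N : ℕ) (j : ℤ) : Set (Cyl d N) :=
  {x | (j - 1) * (N : ℤ) ≤ x.2 ∧ x.2 ≤ (j + 1) * (N : ℤ)}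

/-- The block `B̃_j = (ℤ/Nℤ)^d × [(j-2)N+1, (j+2)N-1]`. -/
def Btl (d N : ℕ) (j : ℤ) : Set (Cyl d N) :=
  {x | (j - 2) * (N : ℤ) + 1 ≤ x.2 ∧ x.2 ≤ (j + 2) * (N : ℤ) - 1}

/-- `D^j_1`: time of the first departure from `B̃_j` after the first return to `B_j`. -/
noncomputable def oneExc (d N : ℕ) (j : ℤ) (ω : ℕ → Cyl d N) : ℕ∞ :=
  after (entT (Bblk d N j) ω) (exitT (Btl d N j)) ω

/-- `D^j_k`: time of the `k`-th departure from `B̃_j` (after successive returns to `B_j`). -/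
noncomputable def DD (d N : ℕ) (j : ℤ) : ℕ → (ℕ → Cyl d N) → ℕ∞
  | 0, _ => 0
  | k + 1, ω => after (DD d N j k ω) (oneExc d N j) ω

/-- The law `P` of the walk with initial distribution uniform on `B_0`. -/
noncomputable def lawP (d N : ℕ) (Pl : Cyl d N → Measure (ℕ → Cyl d N)) :
    Measure (ℕ → Cyl d N) :=
  ((N : ℝ≥0∞) ^ d * (2 * N + 1))⁻¹ •
    Measure.sum fun x : Cyl d N => if x ∈ Bblk d N 0 then Pl x else 0

/-- Nearest-neighbour adjacency on the cylinder. -/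
def adj (d N : ℕ) (x y : Cyl d N) : Prop :=
  x ≠ y ∧ ∃ e ∈ unitVecs d, y = x + projE d N e

/-- `x` and `y` are connected by a nearest-neighbour path inside `S`. -/
def connIn (d N : ℕ) (S : Set (Cyl d N)) (x y : Cyl d N) : Prop :=
  Relation.ReflTransGen (fun a b => a ∈ S ∧ b ∈ S ∧ adj d N a b) x y

/-- `S` is a connected set. -/
def IsConnIn (d N : ℕ) (S : Set (Cyl d N)) : Prop :=
  ∀ x ∈ S, ∀ y ∈ S, connIn d N S x y

/-- The boundary `∂U`. -/
def bdry (d N : ℕ) (U : Set (Cyl d N)) : Set (Cyl d N) :=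
  {x | x ∉ U ∧ ∃ y ∈ U, adj d N x y}

/-- `ℓ^∞`-norm on `ℤ^{d+1}`. -/
def linf {d : ℕ} (v : Lat d) : ℕ := Finset.univ.sup fun i => (v i).natAbs

/-- `ℓ^∞`-distance induced on the cylinder. -/
noncomputable def cylDist (d N : ℕ) (x y : Cyl d N) : ℕ :=
  sInf {r : ℕ | ∃ v : Lat d, projE d N v = y - x ∧ linf v = r}

/-- `S` has `ℓ^∞`-diameter at least `L`. -/
def diamGE (d N : ℕ) (S : Set (Cyl d N)) (L : ℕ) : Prop :=
  ∃ x ∈ S, ∃ y ∈ S, L ≤ cylDist d N x y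

/-- `X_{[0,n]}`: the set of points visited up to time `n`. -/
def ran {X : Type*} (ω : ℕ → X) (n : ℕ) : Set X := {y | ∃ i ≤ n, ω i = y}

/-- The set of points visited up to the (possibly infinite) time `t`. -/
def ranE {X : Type*} (ω : ℕ → X) (t : ℕ∞) : Set X :=
  {y | ∃ i : ℕ, (i : ℕ∞) ≤ t ∧ ω i = y}

/-- `L_m`: projections to `E` of `m`-dimensional affine coordinate lattices of `ℤ^{d+1}`. -/
def Lcoll (d N m : ℕ) : Set (Set (Cyl d N)) :=
  {F | ∃ I : Finset (Fin (d + 1)), I.card = m ∧ ∃ y : Lat d,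
      F = (fun v => projE d N (y + v)) '' {v : Lat d | ∀ i ∉ I, v i = 0}}

/-- `A^j_m`: nonempty subsets of `C_j` contained in some `F ∈ L_m`. -/
def Adm (d N : ℕ) (j : ℤ) (m : ℕ) : Set (Finset (Cyl d N)) :=
  {A | A.Nonempty ∧ ↑A ⊆ Cblk d N j ∧ ∃ F ∈ Lcoll d N m, (↑A : Set (Cyl d N)) ⊆ F}

/-- The segment `{x + k·e : 0 ≤ k ≤ L}` (addition via `π_E`). -/
def segment (d N : ℕ) (x : Cyl d N) (e : Lat d) (L : ℕ) : Set (Cyl d N) :=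
  {y | ∃ k : ℕ, k ≤ L ∧ y = x + projE d N ((k : ℤ) • e)}

/-- The event `V_{K,j,t}` (with `k = ⌊t⌋` excursions). -/
def Vev (d N : ℕ) (K : ℝ) (j : ℤ) (k : ℕ) : Set (ℕ → Cyl d N) :=
  {ω | ∀ x ∈ Cblk d N j, ∀ e ∈ unitVecs d, ∃ i : ℕ, (i : ℝ) < Real.sqrt N ∧
      ∀ l : ℕ, i ≤ l → l ≤ i + ⌊K * Real.log N⌋₊ →
        x + projE d N ((l : ℤ) • e) ∉ ranE ω (DD d N j k ω)}

/-- The event `U_{K,j,t}` (with `k = ⌊t⌋` excursions). -/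
def Uev (d N : ℕ) (K : ℝ) (j : ℤ) (k : ℕ) : Set (ℕ → Cyl d N) :=
  {ω | ∀ F ∈ Lcoll d N 2, ∀ n : ℕ, (n : ℕ∞) ≤ DD d N j k ω →
      ∀ O₁ O₂ : Set (Cyl d N),
        O₁ ⊆ (F ∩ Cblk d N j) \ ran ω n → O₂ ⊆ (F ∩ Cblk d N j) \ ran ω n →
        IsConnIn d N O₁ → IsConnIn d N O₂ →
        diamGE d N O₁ ⌊K * Real.log N⌋₊ → diamGE d N O₂ ⌊K * Real.log N⌋₊ →
        ∀ p ∈ O₁, ∀ q ∈ O₂, connIn d N ((F ∩ Cblk d N j) \ ran ω n) p q}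

/-- A (finite) set `S` disconnects the cylinder. -/
def Disconnects (d N : ℕ) (S : Set (Cyl d N)) : Prop :=
  S.Finite ∧ ∃ M₀ : ℕ, ∀ M : ℕ, M₀ ≤ M → ∀ x y : Cyl d N,
    (M : ℤ) ≤ x.2 → y.2 ≤ -(M : ℤ) → ¬ connIn d N Sᶜ x y

/-- The disconnection time `T_N`. -/
noncomputable def discT (d N : ℕ) (ω : ℕ → Cyl d N) : ℕ∞ :=
  sInf {t : ℕ∞ | ∃ n : ℕ, Disconnects d N (ran ω n) ∧ t = n}

/-- `r ≤ t` for `t : ℕ∞` and a real threshold `r` (trivially true when `t = ⊤`). -/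
def geReal (t : ℕ∞) (r : ℝ) : Prop := ∀ n : ℕ, t = (n : ℕ∞) → r ≤ n

/-- `r < t` for `t : ℕ∞` and a real threshold `r` (trivially true when `t = ⊤`). -/
def gtReal (t : ℕ∞) (r : ℝ) : Prop := ∀ n : ℕ, t = (n : ℕ∞) → r < n

/-- `φ_j(z) = E_z[exp(λ Σ_{x∈A} 1{H_x < T_{B̃_j}})]`. -/
noncomputable def phi (d N : ℕ) (Pl : Cyl d N → Measure (ℕ → Cyl d N)) (j : ℤ) (lam : ℝ)
    (A : Finset (Cyl d N)) (z : Cyl d N) : ℝ :=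
  ∫ ω, Real.exp (lam * ∑ x ∈ A, if entT {x} ω < exitT (Btl d N j) ω then (1 : ℝ) else 0)
    ∂(Pl z)

/-- `‖φ_j‖_∞`. -/
noncomputable def phiSup (d N : ℕ) (Pl : Cyl d N → Measure (ℕ → Cyl d N)) (j : ℤ) (lam : ℝ)
    (A : Finset (Cyl d N)) : ℝ :=
  ⨆ z : Cyl d N, phi d N Pl j lam A z

/-- `q_N = sup {P_z[H_F < T_{B̃_j}] : F ∈ L_m, z ∈ ∂F}`. -/
noncomputable def qNval (d N m : ℕ) (Pl : Cyl d N → Measure (ℕ → Cyl d N)) (j : ℤ) : ℝ :=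
  sSup {r : ℝ | ∃ F ∈ Lcoll d N m, ∃ z ∈ bdry d N F,
      r = ((Pl z) {ω | entT F ω < exitT (Btl d N j) ω}).toReal}

/-- The times `τ_k`: `τ_0` is the entrance time of `(ℤ/Nℤ)^d × Nℤ`, and `τ_{k+1}` is the
first time after `τ_k` at which the vertical component has moved by exactly `N`. -/
noncomputable def tauT (d N : ℕ) : ℕ → (ℕ → Cyl d N) → ℕ∞
  | 0, ω => entT {x : Cyl d N | (N : ℤ) ∣ x.2} ω
  | k + 1, ω =>
      (tauT d N k ω).recTopCoe ⊤ fun m =>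
        sInf {t : ℕ∞ | ∃ n : ℕ, m < n ∧ ((ω n).2 - (ω m).2).natAbs = N ∧ t = n}

/-- `*`-adjacency on `ℤ²`. -/
def starAdj (x y : ℤ × ℤ) : Prop :=
  x ≠ y ∧ (x.1 - y.1).natAbs ≤ 1 ∧ (x.2 - y.2).natAbs ≤ 1


/-! ### Auxiliary material for Corollary 1.6 -/

lemma projE_add (d N : ℕ) (v w : Lat d) :
    projE d N (v + w) = projE d N v + projE d N w := by
  refine Prod.ext ?_ ?_
  · funext i; simp [projE]
  · simp [projE]

lemma projE_zero (d N : ℕ) : projE d N 0 = 0 := by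
  refine Prod.ext ?_ ?_ <;> simp [projE] <;> rfl

lemma projE_neg (d N : ℕ) (v : Lat d) : projE d N (-v) = - projE d N v := by
  refine Prod.ext ?_ ?_
  · funext i; simp [projE]
  · simp [projE]

lemma single_mem_unitVecs {d : ℕ} (c : Fin (d+1)) {ε : ℤ} (hε : ε = 1 ∨ ε = -1) :
    Pi.single c ε ∈ unitVecs d := by
  rcases hε with rfl | rfl
  · exact Finset.mem_image.mpr ⟨(c, true), Finset.mem_univ _, by simp⟩
  · exact Finset.mem_image.mpr ⟨(c, false), Finset.mem_univ _, by simp⟩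

lemma exists_of_mem_unitVecs {d : ℕ} {e : Lat d} (he : e ∈ unitVecs d) :
    ∃ c ε, (ε = (1:ℤ) ∨ ε = -1) ∧ e = Pi.single c ε := by
  obtain ⟨⟨c, b⟩, -, rfl⟩ := Finset.mem_image.mp he
  cases b
  · exact ⟨c, -1, Or.inr rfl, by simp⟩
  · exact ⟨c, 1, Or.inl rfl, by simp⟩

lemma neg_mem_unitVecs {d : ℕ} {e : Lat d} (he : e ∈ unitVecs d) : -e ∈ unitVecs d := by
  obtain ⟨c, ε, hε, rfl⟩ := exists_of_mem_unitVecs he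
  have hns : -(Pi.single c ε : Lat d) = Pi.single c (-ε) := by
    funext i
    rw [Pi.neg_apply]
    by_cases h : i = c
    · subst h; rw [Pi.single_eq_same, Pi.single_eq_same]
    · rw [Pi.single_eq_of_ne h, Pi.single_eq_of_ne h, neg_zero]
  rw [hns]
  exact single_mem_unitVecs c (by rcases hε with rfl | rfl <;> norm_num)

lemma adj_symm (d N : ℕ) {x y : Cyl d N} (h : adj d N x y) : adj d N y x := by
  obtain ⟨hne, e, he, hy⟩ := h
  subst hy
  refine ⟨hne.symm, -e, neg_mem_unitVecs he, ?_⟩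
  rw [projE_neg]; abel

lemma connIn_symm (d N : ℕ) (S : Set (Cyl d N)) {x y : Cyl d N}
    (h : connIn d N S x y) : connIn d N S y x :=
  (@Relation.ReflTransGen.stdSymm _ _ ⟨fun _ _ hab => ⟨hab.2.1, hab.1, adj_symm d N hab.2.2⟩⟩).symm _ _ h

lemma connIn_mono (d N : ℕ) {S T : Set (Cyl d N)} (hST : S ⊆ T) {x y : Cyl d N}
    (h : connIn d N S x y) : connIn d N T x y :=
  Relation.ReflTransGen.mono (fun a b hab => ⟨hST hab.1, hST hab.2.1, hab.2.2⟩) _ _ h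

lemma projE_single_ne_zero (d N : ℕ) (hN : 2 ≤ N) (c : Fin (d+1)) (ε : ℤ)
    (hε : ε = 1 ∨ ε = -1) : projE d N (Pi.single c ε) ≠ 0 := by
  haveI : NeZero N := ⟨by omega⟩
  intro h
  by_cases hc : c = Fin.last d
  · have h2 := congrArg Prod.snd h
    subst hc
    simp only [projE, Pi.single_eq_same] at h2
    rcases hε with rfl | rfl <;> simp at h2
  · obtain ⟨c', rfl⟩ := Fin.eq_castSucc_of_ne_last hc
    have h1 := congrArg (fun z : Cyl d N => z.1 c') h
    simp only [projE, Pi.single_eq_same] at h1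
    have hdvd : (N : ℤ) ∣ ε := by
      refine (ZMod.intCast_zmod_eq_zero_iff_dvd ε N).mp ?_
      simpa using h1
    have hdvd1 : (N : ℤ) ∣ 1 := by
      rcases hε with rfl | rfl
      · exact hdvd
      · exact dvd_neg.mp hdvd
    have := Int.le_of_dvd one_pos hdvd1
    omega

/-- The segment `{x + k·e : i ≤ k ≤ i + L}`. -/
def seg (d N : ℕ) (x : Cyl d N) (e : Lat d) (i L : ℕ) : Set (Cyl d N) :=
  {y | ∃ l : ℕ, i ≤ l ∧ l ≤ i + L ∧ y = x + projE d N ((l : ℤ) • e)}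

lemma segment_eq_seg (d N : ℕ) (x : Cyl d N) (e : Lat d) (L : ℕ) :
    segment d N x e L = seg d N x e 0 L := by
  ext y
  constructor
  · rintro ⟨l, hl, rfl⟩; exact ⟨l, Nat.zero_le _, by omega, rfl⟩
  · rintro ⟨l, _, hl, rfl⟩; exact ⟨l, by omega, rfl⟩

lemma seg_step (d N : ℕ) (x : Cyl d N) (e : Lat d) (l : ℕ) :
    x + projE d N (((l + 1 : ℕ) : ℤ) • e) = x + projE d N ((l : ℤ) • e) + projE d N e := by
  rw [add_assoc, ← projE_add]
  congr 1
  push_cast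
  rw [add_smul, one_smul]

lemma isConnIn_seg (d N : ℕ) (hN : 2 ≤ N) (x : Cyl d N) (c : Fin (d+1)) (ε : ℤ)
    (hε : ε = 1 ∨ ε = -1) (i L : ℕ) :
    IsConnIn d N (seg d N x (Pi.single c ε) i L) := by
  have hpe : projE d N (Pi.single c ε) ≠ 0 := projE_single_ne_zero d N hN c ε hε
  have hADJ : ∀ l : ℕ, adj d N (x + projE d N ((l : ℤ) • Pi.single c ε))
      (x + projE d N (((l + 1 : ℕ) : ℤ) • Pi.single c ε)) := by
    intro l
    refine ⟨?_, Pi.single c ε, single_mem_unitVecs c hε, seg_step d N x _ l⟩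
    intro hcontra
    apply hpe
    have h2 : x + projE d N ((l : ℤ) • Pi.single c ε)
        = x + projE d N ((l : ℤ) • Pi.single c ε) + projE d N (Pi.single c ε) := by
      rw [← seg_step d N x _ l]; exact hcontra
    exact left_eq_add.mp h2
  have key : ∀ l₁, i ≤ l₁ → ∀ l₂, l₁ ≤ l₂ → l₂ ≤ i + L →
      connIn d N (seg d N x (Pi.single c ε) i L)
        (x + projE d N ((l₁ : ℤ) • Pi.single c ε))
        (x + projE d N ((l₂ : ℤ) • Pi.single c ε)) := by
    intro l₁ hil₁ l₂ hl₁₂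
    induction l₂, hl₁₂ using Nat.le_induction with
    | base => intro _; exact Relation.ReflTransGen.refl
    | succ l₂ hl ih =>
      intro hub
      refine Relation.ReflTransGen.tail (ih (by omega)) ?_
      exact ⟨⟨l₂, by omega, by omega, rfl⟩, ⟨l₂ + 1, by omega, by omega, rfl⟩, hADJ l₂⟩
  rintro y₁ ⟨l₁, hl₁, hl₁', rfl⟩ y₂ ⟨l₂, hl₂, hl₂', rfl⟩
  rcases le_total l₁ l₂ with hc | hc
  · exact key l₁ hl₁ l₂ hc hl₂'
  · exact connIn_symm d N _ (key l₂ hl₂ l₁ hc hl₁')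

lemma natAbs_le_linf {d : ℕ} (v : Lat d) (c : Fin (d+1)) : (v c).natAbs ≤ linf v := by
  unfold linf
  exact Finset.le_sup (f := fun i => (v i).natAbs) (Finset.mem_univ c)

lemma le_cylDist_seg (d N : ℕ) (hN : 2 ≤ N) {L : ℕ} (h2L : 2 * L < N)
    (x : Cyl d N) (c : Fin (d+1)) (ε : ℤ) (hε : ε = 1 ∨ ε = -1) :
    L ≤ cylDist d N x (x + projE d N ((L : ℤ) • Pi.single c ε)) := by
  haveI : NeZero N := ⟨by omega⟩
  have hy : x + projE d N ((L : ℤ) • Pi.single c ε) - x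
      = projE d N ((L : ℤ) • Pi.single c ε) := by abel
  refine le_csInf ⟨linf ((L : ℤ) • Pi.single c ε), ⟨_, by rw [hy], rfl⟩⟩ ?_
  rintro r ⟨v, hv, rfl⟩
  rw [hy] at hv
  refine le_trans ?_ (natAbs_le_linf v c)
  by_cases hc : c = Fin.last d
  · subst hc
    have h2 := congrArg Prod.snd hv
    simp only [projE, Pi.smul_apply, Pi.single_eq_same, smul_eq_mul] at h2
    rcases hε with rfl | rfl <;> rw [h2] <;> simp [Int.natAbs_mul]
  · obtain ⟨c', rfl⟩ := Fin.eq_castSucc_of_ne_last hc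
    have h1 := congrArg (fun z : Cyl d N => z.1 c') hv
    simp only [projE, Pi.smul_apply, Pi.single_eq_same, smul_eq_mul] at h1
    have hdvd : (N : ℤ) ∣ (v c'.castSucc - (L : ℤ) * ε) := by
      refine (ZMod.intCast_zmod_eq_zero_iff_dvd _ N).mp ?_
      push_cast
      rw [h1]
      push_cast
      ring
    by_contra hlt
    push_neg at hlt
    have hne : v c'.castSucc - (L : ℤ) * ε ≠ 0 := by
      intro h0
      have hvc : v c'.castSucc = (L : ℤ) * ε := by omega
      rcases hε with rfl | rfl <;> rw [hvc] at hlt <;> simp [Int.natAbs_mul] at hlt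
    have hge := Int.le_of_dvd (abs_pos.mpr hne) ((dvd_abs _ _).mpr hdvd)
    have habs : |v c'.castSucc - (L : ℤ) * ε| < (N : ℤ) := by
      rw [abs_lt]
      rcases hε with rfl | rfl <;> constructor <;> omega
    omega

lemma diam_seg (d N : ℕ) (hN : 2 ≤ N) {L : ℕ} (h2L : 2 * L < N)
    (x : Cyl d N) (c : Fin (d+1)) (ε : ℤ) (hε : ε = 1 ∨ ε = -1) (i : ℕ) :
    diamGE d N (seg d N x (Pi.single c ε) i L) L := by
  refine ⟨x + projE d N ((i : ℤ) • Pi.single c ε), ⟨i, le_refl _, Nat.le_add_right _ _, rfl⟩,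
    x + projE d N (((i + L : ℕ) : ℤ) • Pi.single c ε),
    ⟨i + L, Nat.le_add_right _ _, le_refl _, rfl⟩, ?_⟩
  have hre : x + projE d N (((i + L : ℕ) : ℤ) • Pi.single c ε)
      = (x + projE d N ((i : ℤ) • Pi.single c ε))
          + projE d N ((L : ℤ) • Pi.single c ε) := by
    rw [add_assoc, ← projE_add]
    congr 1
    push_cast
    rw [add_smul]
  rw [hre]
  exact le_cylDist_seg d N hN h2L _ c ε hε

lemma mem_Cblk_of_snd (d N : ℕ) (j : ℤ) {x y : Cyl d N} (hx : x ∈ Cblk d N j)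
    (h : y.2 = x.2) : y ∈ Cblk d N j := by
  simp only [Cblk, Set.mem_setOf_eq] at hx ⊢
  rw [h]
  exact hx

lemma snd_add_projE_torus (d N : ℕ) (x : Cyl d N) (c' : Fin d) (a : ℤ) :
    (x + projE d N (a • Pi.single c'.castSucc (1:ℤ))).2 = x.2 := by
  have h0 : (a • (Pi.single c'.castSucc (1:ℤ) : Lat d)) (Fin.last d) = 0 := by
    simp [Pi.single_eq_of_ne (Fin.castSucc_lt_last c').ne']
  show x.2 + _ = x.2
  simp [projE, h0]

lemma seg_subset_Cblk (d N : ℕ) (j : ℤ) {x : Cyl d N} (hx : x ∈ Cblk d N j)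
    (c' : Fin d) (i L : ℕ) :
    seg d N x (Pi.single c'.castSucc (1:ℤ)) i L ⊆ Cblk d N j := by
  rintro y ⟨l, _, _, rfl⟩
  exact mem_Cblk_of_snd d N j hx (snd_add_projE_torus d N x c' l)

/-- A lift of a cylinder point to `ℤ^{d+1}`. -/
def liftE (d N : ℕ) (x : Cyl d N) : Lat d :=
  Fin.snoc (fun i0 => ((x.1 i0).val : ℤ)) x.2

lemma projE_liftE (d N : ℕ) (hN : 2 ≤ N) (x : Cyl d N) : projE d N (liftE d N x) = x := by
  haveI : NeZero N := ⟨by omega⟩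
  refine Prod.ext ?_ ?_
  · funext i0
    simp [projE, liftE, Fin.snoc_castSucc, ZMod.natCast_val, ZMod.cast_id]
  · simp [projE, liftE, Fin.snoc_last]

lemma plane_lemma (d N : ℕ) (hN : 2 ≤ N) (x : Cyl d N) (I : Finset (Fin (d+1)))
    (hI : I.card = 2) :
    ∃ F ∈ Lcoll d N 2, ∀ u : Lat d, (∀ m ∉ I, u m = 0) → x + projE d N u ∈ F := by
  refine ⟨_, ⟨I, hI, liftE d N x, rfl⟩, ?_⟩
  intro u hu
  refine ⟨u, hu, ?_⟩
  show projE d N (liftE d N x + u) = x + projE d N u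
  rw [projE_add, projE_liftE d N hN x]

lemma cylDist_le_half (d N : ℕ) (hN : 2 ≤ N) (a b : Fin d → ZMod N) :
    cylDist d N (a, (0 : ℤ)) (b, (0 : ℤ)) ≤ N / 2 := by
  haveI : NeZero N := ⟨by omega⟩
  set g : ZMod N → ℤ := fun z => if 2 * z.val ≤ N then (z.val : ℤ) else (z.val : ℤ) - N
    with hg
  have hgcast : ∀ z : ZMod N, ((g z : ℤ) : ZMod N) = z := by
    intro z
    by_cases h : 2 * z.val ≤ N
    · simp [hg, h, ZMod.natCast_val, ZMod.cast_id]
    · simp [hg, h, ZMod.natCast_val, ZMod.cast_id, ZMod.natCast_self]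
  have hgabs : ∀ z : ZMod N, (g z).natAbs ≤ N / 2 := by
    intro z
    have hlt := ZMod.val_lt z
    by_cases h : 2 * z.val ≤ N
    · simp only [hg]
      rw [if_pos h]
      omega
    · simp only [hg]
      rw [if_neg h]
      omega
  set v : Lat d := Fin.snoc (fun i0 => g (b i0 - a i0)) 0 with hv
  have hproj : projE d N v = (b, (0 : ℤ)) - (a, (0 : ℤ)) := by
    refine Prod.ext ?_ ?_
    · funext i0
      simp [projE, hv, Fin.snoc_castSucc, hgcast]
    · simp [projE, hv, Fin.snoc_last]
  have h1 : cylDist d N (a, (0 : ℤ)) (b, (0 : ℤ)) ≤ linf v := Nat.sInf_le ⟨v, hproj, rfl⟩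
  have h2 : linf v ≤ N / 2 := by
    refine Finset.sup_le fun i _ => ?_
    induction i using Fin.lastCases with
    | last => simp [hv, Fin.snoc_last]
    | cast i0 =>
      have : v i0.castSucc = g (b i0 - a i0) := by simp [hv, Fin.snoc_castSucc]
      rw [this]
      exact hgabs _
  omega

/-- Two coplanar good segments are connected off the range, via the event `U`. -/
lemma connect_segs (d N : ℕ) (hN : 2 ≤ N) (c₀ : ℝ) (j : ℤ) (k n : ℕ) (ω : ℕ → Cyl d N)
    (hU : ω ∈ Uev d N c₀ j k) (hn : (n : ℕ∞) ≤ DD d N j k ω)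
    (hL2 : 2 * ⌊c₀ * Real.log N⌋₊ < N)
    (x x' : Cyl d N) (c c' : Fin (d+1)) (ε ε' : ℤ)
    (hε : ε = 1 ∨ ε = -1) (hε' : ε' = 1 ∨ ε' = -1) (i i' : ℕ)
    (I : Finset (Fin (d+1))) (hI : I.card = 2) (hcI : c ∈ I) (hc'I : c' ∈ I)
    (u : Lat d) (hu : ∀ m ∉ I, u m = 0) (hx' : x' = x + projE d N u)
    (hA : seg d N x (Pi.single c ε) i ⌊c₀ * Real.log N⌋₊ ⊆ Cblk d N j \ ran ω n)
    (hB : seg d N x' (Pi.single c' ε') i' ⌊c₀ * Real.log N⌋₊ ⊆ Cblk d N j \ ran ω n) :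
    ∀ a ∈ seg d N x (Pi.single c ε) i ⌊c₀ * Real.log N⌋₊,
      ∀ b ∈ seg d N x' (Pi.single c' ε') i' ⌊c₀ * Real.log N⌋₊,
        connIn d N (Cblk d N j \ ran ω n) a b := by
  obtain ⟨F, hF, hFmem⟩ := plane_lemma d N hN x I hI
  have hAF : seg d N x (Pi.single c ε) i ⌊c₀ * Real.log N⌋₊ ⊆ F := by
    rintro y ⟨l, _, _, rfl⟩
    refine hFmem _ fun m hm => ?_
    simp [Pi.single_eq_of_ne (show m ≠ c from fun hmc => hm (hmc ▸ hcI))]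
  have hBF : seg d N x' (Pi.single c' ε') i' ⌊c₀ * Real.log N⌋₊ ⊆ F := by
    rintro y ⟨l, _, _, rfl⟩
    have hre : x' + projE d N ((l : ℤ) • Pi.single c' ε')
        = x + projE d N (u + (l : ℤ) • Pi.single c' ε') := by
      rw [projE_add, hx', add_assoc]
    rw [hre]
    refine hFmem _ fun m hm => ?_
    have h1 : u m = 0 := hu m hm
    have h2 : ((l : ℤ) • (Pi.single c' ε' : Lat d)) m = 0 := by
      simp [Pi.single_eq_of_ne (show m ≠ c' from fun hmc => hm (hmc ▸ hc'I))]
    rw [Pi.add_apply, h1, h2, add_zero]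
  intro a ha b hb
  have hO1 : seg d N x (Pi.single c ε) i ⌊c₀ * Real.log N⌋₊
      ⊆ (F ∩ Cblk d N j) \ ran ω n :=
    by
    intro y hy
    exact ⟨⟨hAF hy, (hA hy).1⟩, (hA hy).2⟩
  have hO2 : seg d N x' (Pi.single c' ε') i' ⌊c₀ * Real.log N⌋₊
      ⊆ (F ∩ Cblk d N j) \ ran ω n :=
    by
    intro y hy
    exact ⟨⟨hBF hy, (hB hy).1⟩, (hB hy).2⟩
  have hres := hU F hF n hn
    (seg d N x (Pi.single c ε) i ⌊c₀ * Real.log N⌋₊)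
    (seg d N x' (Pi.single c' ε') i' ⌊c₀ * Real.log N⌋₊)
    hO1 hO2
    (isConnIn_seg d N hN x c ε hε i _) (isConnIn_seg d N hN x' c' ε' hε' i' _)
    (diam_seg d N hN hL2 x c ε hε i) (diam_seg d N hN hL2 x' c' ε' hε' i')
    a ha b hb
  refine connIn_mono d N (S := (F ∩ Cblk d N j) \ ran ω n) ?_ hres
  intro y hy
  exact ⟨hy.1.2, hy.2⟩

/-- **Corollary 1.6, claim (1.47).** On `G_{j,t} = V_{c₀,j,t} ∩ U_{c₀,j,t}`, for any
`0 ≤ n ≤ D^j_t`, all segments of length `L₀ = ⌊c₀ log N⌋` contained in `C_j \ X_{[0,n]}`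
lie in the same connected component of `C_j \ X_{[0,n]}`. -/
theorem statement_9 (d N : ℕ) (hd : 3 ≤ d) (hN : 2 ≤ N) (c₀ : ℝ) (hc₀ : 0 < c₀)
    (hdiam : ∃ a b : Fin d → ZMod N,
      c₀ * Real.log N < cylDist d N (a, (0 : ℤ)) (b, (0 : ℤ)))
    (j : ℤ) (k : ℕ) (ω : ℕ → Cyl d N)
    (hω : ω ∈ Vev d N c₀ j k ∩ Uev d N c₀ j k)
    (n : ℕ) (hn : (n : ℕ∞) ≤ DD d N j k ω)
    (x₁ x₂ : Cyl d N) (e₁ e₂ : Lat d) (he₁ : e₁ ∈ unitVecs d) (he₂ : e₂ ∈ unitVecs d)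
    (h₁ : segment d N x₁ e₁ ⌊c₀ * Real.log N⌋₊ ⊆ Cblk d N j \ ran ω n)
    (h₂ : segment d N x₂ e₂ ⌊c₀ * Real.log N⌋₊ ⊆ Cblk d N j \ ran ω n) :
    ∀ p ∈ segment d N x₁ e₁ ⌊c₀ * Real.log N⌋₊,
    ∀ q ∈ segment d N x₂ e₂ ⌊c₀ * Real.log N⌋₊,
      connIn d N (Cblk d N j \ ran ω n) p q := by
  classical
  have hV : ω ∈ Vev d N c₀ j k := hω.1
  have hU : ω ∈ Uev d N c₀ j k := hω.2
  haveI : NeZero N := ⟨by omega⟩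
  obtain ⟨c₁, ε₁, hε₁, he₁e⟩ := exists_of_mem_unitVecs he₁
  obtain ⟨c₂, ε₂, hε₂, he₂e⟩ := exists_of_mem_unitVecs he₂
  subst he₁e he₂e
  rw [segment_eq_seg] at h₁ h₂
  intro p hp q hq
  rw [segment_eq_seg] at hp hq
  -- `2 L₀ < N`
  have hL2 : 2 * ⌊c₀ * Real.log N⌋₊ < N := by
    obtain ⟨a, b, hab⟩ := hdiam
    have h1 : (⌊c₀ * Real.log N⌋₊ : ℝ) ≤ c₀ * Real.log N :=
      Nat.floor_le (mul_nonneg hc₀.le (Real.log_nonneg (by exact_mod_cast Nat.one_le_of_lt hN)))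
    have h2 : ⌊c₀ * Real.log N⌋₊ < cylDist d N (a, (0 : ℤ)) (b, (0 : ℤ)) := by
      exact_mod_cast h1.trans_lt hab
    have h3 := cylDist_le_half d N hN a b
    omega
  -- the range up to `n` is inside the range up to `D^j_k`
  have hran : ran ω n ⊆ ranE ω (DD d N j k ω) := by
    rintro y ⟨i, hi, rfl⟩
    exact ⟨i, le_trans (Nat.cast_le.mpr hi) hn, rfl⟩
  -- producing free segments from the event `V`
  have mkfree : ∀ v : Cyl d N, v ∈ Cblk d N j → ∀ m : Fin d, ∃ i : ℕ,
      seg d N v (Pi.single m.castSucc 1) i ⌊c₀ * Real.log N⌋₊ ⊆ Cblk d N j \ ran ω n := by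
    intro v hv m
    obtain ⟨i, -, hfree⟩ := hV v hv (Pi.single m.castSucc (1:ℤ))
      (single_mem_unitVecs m.castSucc (Or.inl rfl))
    refine ⟨i, ?_⟩
    rintro y ⟨l, hl1, hl2, rfl⟩
    exact ⟨seg_subset_Cblk d N j hv m i _ ⟨l, hl1, hl2, rfl⟩,
      fun hy => hfree l hl1 hl2 (hran hy)⟩
  -- choosing torus directions avoiding two given coordinates
  have pick : ∀ u v : Fin (d+1), ∃ m : Fin d, m.castSucc ≠ u ∧ m.castSucc ≠ v := by
    intro u v
    set a0 : Fin (d+1) := (⟨0, by omega⟩ : Fin d).castSucc with ha0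
    set a1 : Fin (d+1) := (⟨1, by omega⟩ : Fin d).castSucc with ha1
    set a2 : Fin (d+1) := (⟨2, by omega⟩ : Fin d).castSucc with ha2
    have h01 : a0 ≠ a1 := by simp [ha0, ha1, Fin.ext_iff]
    have h02 : a0 ≠ a2 := by simp [ha0, ha2, Fin.ext_iff]
    have h12 : a1 ≠ a2 := by simp [ha1, ha2, Fin.ext_iff]
    by_cases h0 : a0 ≠ u ∧ a0 ≠ v
    · exact ⟨⟨0, by omega⟩, h0⟩
    by_cases h1 : a1 ≠ u ∧ a1 ≠ v
    · exact ⟨⟨1, by omega⟩, h1⟩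
    by_cases h2 : a2 ≠ u ∧ a2 ≠ v
    · exact ⟨⟨2, by omega⟩, h2⟩
    exfalso
    push_neg at h0 h1 h2
    by_cases hu : a0 = u
    · have e1 : a1 = v := h1 fun h => h01 (hu.trans h.symm)
      have e2 : a2 = v := h2 fun h => h02 (hu.trans h.symm)
      exact h12 (e1.trans e2.symm)
    · have e0 : a0 = v := h0 hu
      by_cases hu1 : a1 = u
      · have e2 : a2 = v := h2 fun h => h12 (hu1.trans h.symm)
        exact h02 (e0.trans e2.symm)
      · have e1 : a1 = v := h1 hu1
        exact h01 (e0.trans e1.symm)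
  obtain ⟨m₁, hm₁a, -⟩ := pick c₁ c₁
  obtain ⟨m₂, hm₂a, hm₂b⟩ := pick c₂ m₁.castSucc
  -- base points are in `C_j`
  have hx₁S : x₁ ∈ seg d N x₁ (Pi.single c₁ ε₁) 0 ⌊c₀ * Real.log N⌋₊ :=
    ⟨0, le_refl _, Nat.zero_le _, by rw [Nat.cast_zero, zero_smul, projE_zero, add_zero]⟩
  have hx₂S : x₂ ∈ seg d N x₂ (Pi.single c₂ ε₂) 0 ⌊c₀ * Real.log N⌋₊ :=
    ⟨0, le_refl _, Nat.zero_le _, by rw [Nat.cast_zero, zero_smul, projE_zero, add_zero]⟩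
  have hx₁C : x₁ ∈ Cblk d N j := (h₁ hx₁S).1
  have hx₂C : x₂ ∈ Cblk d N j := (h₂ hx₂S).1
  -- free segments at the two base points
  obtain ⟨i₁, hA₁⟩ := mkfree x₁ hx₁C m₁
  obtain ⟨i₂, hB₂⟩ := mkfree x₂ hx₂C m₂
  -- the far side: from the free segment at `x₂` to `q`
  have side2 : ∀ bpt ∈ seg d N x₂ (Pi.single m₂.castSucc 1) i₂ ⌊c₀ * Real.log N⌋₊,
      connIn d N (Cblk d N j \ ran ω n) bpt q :=
    fun bpt hbpt => connect_segs d N hN c₀ j k n ω hU hn hL2 x₂ x₂ m₂.castSucc c₂ 1 ε₂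
      (Or.inl rfl) hε₂ i₂ 0 {m₂.castSucc, c₂} (Finset.card_pair hm₂a)
      (by simp) (by simp) 0 (fun m _ => rfl) (by rw [projE_zero, add_zero])
      hB₂ h₂ bpt hbpt q hq
  -- the near side: from `p` to the free segment at `x₁`
  have step1 : connIn d N (Cblk d N j \ ran ω n) p
      (x₁ + projE d N ((i₁ : ℤ) • Pi.single m₁.castSucc 1)) :=
    connect_segs d N hN c₀ j k n ω hU hn hL2 x₁ x₁ c₁ m₁.castSucc ε₁ 1 hε₁
      (Or.inl rfl) 0 i₁ {c₁, m₁.castSucc} (Finset.card_pair (Ne.symm hm₁a))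
      (by simp) (by simp) 0 (fun m _ => rfl) (by rw [projE_zero, add_zero])
      h₁ hA₁ p hp _ ⟨i₁, le_refl _, Nat.le_add_right _ _, rfl⟩
  -- the middle chain: adjust the coordinates one at a time
  have LOOP : ∀ T : Finset (Fin (d+1)), m₁.castSucc ∉ T →
      ∀ (v : Cyl d N) (i : ℕ) (u : Lat d),
        v ∈ Cblk d N j →
        seg d N v (Pi.single m₁.castSucc 1) i ⌊c₀ * Real.log N⌋₊ ⊆ Cblk d N j \ ran ω n →
        (∀ m, m ∉ insert m₁.castSucc T → u m = 0) →
        v = x₂ + projE d N u →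
        ∀ a ∈ seg d N v (Pi.single m₁.castSucc 1) i ⌊c₀ * Real.log N⌋₊,
          connIn d N (Cblk d N j \ ran ω n) a q := by
    intro T
    induction T using Finset.induction_on with
    | empty =>
      intro _ v i u hvC hfree hsupp hveq a ha
      have hstep := connect_segs d N hN c₀ j k n ω hU hn hL2 v x₂ m₁.castSucc m₂.castSucc 1 1
        (Or.inl rfl) (Or.inl rfl) i i₂ {m₁.castSucc, m₂.castSucc}
        (Finset.card_pair (Ne.symm hm₂b)) (by simp) (by simp)
        (-u)
        (fun m hm => by
          have hm1 : m ≠ m₁.castSucc := fun h => hm (by simp [h])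
          have hu0 : u m = 0 := hsupp m (by simpa using hm1)
          simp [hu0])
        (by rw [hveq, projE_neg]; abel)
        hfree hB₂ a ha
        (x₂ + projE d N ((i₂ : ℤ) • Pi.single m₂.castSucc 1))
        ⟨i₂, le_refl _, Nat.le_add_right _ _, rfl⟩
      exact Relation.ReflTransGen.trans hstep
        (side2 _ ⟨i₂, le_refl _, Nat.le_add_right _ _, rfl⟩)
    | @insert m T' hmT' ih =>
      intro hs₁T v i u hvC hfree hsupp hveq a ha
      have hs₁m : m₁.castSucc ≠ m := fun h => hs₁T (by simp [h])
      have hs₁T' : m₁.castSucc ∉ T' := fun h => hs₁T (by simp [h])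
      set u' : Lat d := u - Pi.single m (u m) with hu'
      set v' : Cyl d N := x₂ + projE d N u' with hv'
      have hv'C : v' ∈ Cblk d N j := by
        by_cases hml : m = Fin.last d
        · refine mem_Cblk_of_snd d N j hx₂C ?_
          have h0 : u' (Fin.last d) = 0 := by
            rw [hu', Pi.sub_apply, ← hml, Pi.single_eq_same, sub_self]
          show x₂.2 + (u' (Fin.last d)) = x₂.2
          rw [h0, add_zero]
        · refine mem_Cblk_of_snd d N j hvC ?_
          have hlast : u' (Fin.last d) = u (Fin.last d) := by
            rw [hu', Pi.sub_apply, Pi.single_eq_of_ne (fun h => hml h.symm), sub_zero]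
          rw [hv', hveq]
          show x₂.2 + (u' (Fin.last d)) = x₂.2 + (u (Fin.last d))
          rw [hlast]
      obtain ⟨i', hfree'⟩ := mkfree v' hv'C m₁
      have hstep := connect_segs d N hN c₀ j k n ω hU hn hL2 v v' m₁.castSucc m₁.castSucc 1 1
        (Or.inl rfl) (Or.inl rfl) i i' {m₁.castSucc, m} (Finset.card_pair hs₁m)
        (by simp) (by simp)
        (-(Pi.single m (u m)))
        (fun m' hm' => by
          have hne : m' ≠ m := fun h => hm' (by simp [h])
          simp [Pi.single_eq_of_ne hne])
        (by rw [hv', hveq, hu', sub_eq_add_neg, projE_add]; abel)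
        hfree hfree' a ha
        (v' + projE d N ((i' : ℤ) • Pi.single m₁.castSucc 1))
        ⟨i', le_refl _, Nat.le_add_right _ _, rfl⟩
      have hsupp' : ∀ m', m' ∉ insert m₁.castSucc T' → u' m' = 0 := by
        intro m' hm'
        by_cases h : m' = m
        · subst h; rw [hu', Pi.sub_apply, Pi.single_eq_same, sub_self]
        · have h1 : u m' = 0 := by
            refine hsupp m' fun hmem => ?_
            rcases Finset.mem_insert.mp hmem with h2 | h2
            · exact hm' (by simp [h2])
            · rcases Finset.mem_insert.mp h2 with h3 | h3
              · exact h h3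
              · exact hm' (by simp [h3])
          rw [hu', Pi.sub_apply, h1, Pi.single_eq_of_ne h, sub_zero]
      have htail := ih hs₁T' v' i' u' hv'C hfree' hsupp' hv'
        (v' + projE d N ((i' : ℤ) • Pi.single m₁.castSucc 1))
        ⟨i', le_refl _, Nat.le_add_right _ _, rfl⟩
      exact Relation.ReflTransGen.trans hstep htail
  -- put everything together
  have hx₁eq : x₁ = x₂ + projE d N (liftE d N (x₁ - x₂)) := by
    rw [projE_liftE d N hN]; abel
  have hmain := LOOP (Finset.univ.erase m₁.castSucc) (Finset.notMem_erase _ _)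
    x₁ i₁ (liftE d N (x₁ - x₂)) hx₁C hA₁
    (fun m hm => absurd (Finset.mem_univ m)
      (by rwa [Finset.insert_erase (Finset.mem_univ _)] at hm))
    hx₁eq
    (x₁ + projE d N ((i₁ : ℤ) • Pi.single m₁.castSucc 1))
    ⟨i₁, le_refl _, Nat.le_add_right _ _, rfl⟩
  exact Relation.ReflTransGen.trans step1 hmain

end DiscCyl
end

section
/- (Inequality (1.20)) Let d ≥ 3. There is a constant c depending only on d such that for all N ≥ 2, all j ∈ ℤ and every nonempty subset A of C_j, P[H_A < D^j_1] ≤ c |A| / N^{d−1}, where P is the law of the walk with initial distribution uniform on B_0. -/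
open MeasureTheory Filter
open scoped ENNReal Classical

namespace DiscCyl

/-! ### Infrastructure for the proof of (1.20) -/

section Infra

instance (N : ℕ) : MeasurableSingletonClass (ZMod N) := ⟨fun _ => trivial⟩

lemma cyl_measurableSet {d N : ℕ} (S : Set (Cyl d N)) : MeasurableSet S :=
  S.to_countable.measurableSet

lemma enat_coe_add_le_iff {r n : ℕ} {s : ℕ∞} :
    (r : ℕ∞) + s ≤ (n : ℕ∞) ↔ r ≤ n ∧ s ≤ ((n - r : ℕ) : ℕ∞) := by
  cases s with
  | top => simp [add_top]
  | coe m =>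
    simp only [← Nat.cast_add, Nat.cast_le]
    omega

lemma entT_le_nat {X : Type*} {U : Set X} {ω : ℕ → X} {n : ℕ} :
    entT U ω ≤ (n : ℕ∞) ↔ ∃ m ≤ n, ω m ∈ U := by
  constructor
  · intro hle
    by_contra hc
    push_neg at hc
    have hlb : (n : ℕ∞) + 1 ≤ entT U ω := by
      apply le_sInf
      rintro t ⟨m, hm, rfl⟩
      have hnm : n + 1 ≤ m := by
        by_contra h'
        exact hc m (by omega) hm
      have : ((n + 1 : ℕ) : ℕ∞) ≤ (m : ℕ∞) := Nat.cast_le.mpr hnm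
      simpa using this
    have hfin : (n : ℕ∞) + 1 ≤ (n : ℕ∞) := hlb.trans hle
    have : ((n + 1 : ℕ) : ℕ∞) ≤ ((n : ℕ) : ℕ∞) := by simpa using hfin
    have := Nat.cast_le.mp this
    omega
  · rintro ⟨m, hmn, hU⟩
    exact le_trans (sInf_le ⟨m, hU, rfl⟩) (Nat.cast_le.mpr hmn)

lemma entT_eq_nat {X : Type*} {U : Set X} {ω : ℕ → X} {r : ℕ} :
    entT U ω = (r : ℕ∞) ↔ ω r ∈ U ∧ ∀ m < r, ω m ∉ U := by
  constructor
  · intro h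
    have hne : {t : ℕ∞ | ∃ n : ℕ, ω n ∈ U ∧ t = n}.Nonempty := by
      by_contra hc
      rw [Set.not_nonempty_iff_eq_empty] at hc
      rw [entT, hc, sInf_empty] at h
      simp at h
    obtain ⟨m, hU, hm⟩ := csInf_mem hne
    have hm2 : entT U ω = (m : ℕ∞) := hm
    rw [h] at hm2
    have hmr : m = r := by exact_mod_cast hm2.symm
    subst hmr
    refine ⟨hU, fun m' hm' hU' => ?_⟩
    have : entT U ω ≤ m' := entT_le_nat.mpr ⟨m', le_rfl, hU'⟩
    rw [h] at this
    have := Nat.cast_le.mp this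
    omega
  · rintro ⟨hU, hmin⟩
    apply le_antisymm (entT_le_nat.mpr ⟨r, le_rfl, hU⟩)
    apply le_sInf
    rintro t ⟨m, hm, rfl⟩
    have : r ≤ m := by
      by_contra h'
      exact hmin m (by omega) hm
    exact Nat.cast_le.mpr this

lemma DD_one (d N : ℕ) (j : ℤ) (ω : ℕ → Cyl d N) :
    DD d N j 1 ω = oneExc d N j ω := by
  have h0 : DD d N j 0 ω = ((0 : ℕ) : ℕ∞) := rfl
  show after (DD d N j 0 ω) (oneExc d N j) ω = _
  rw [h0, after, ENat.recTopCoe_coe]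
  simp

lemma oneExc_le_nat {d N : ℕ} {j : ℤ} {ω : ℕ → Cyl d N} {n : ℕ} :
    oneExc d N j ω ≤ (n : ℕ∞) ↔
      ∃ r ≤ n, (ω r ∈ Bblk d N j ∧ ∀ m < r, ω m ∉ Bblk d N j) ∧
        ∃ m ≤ n - r, ω (m + r) ∉ Btl d N j := by
  cases h : entT (Bblk d N j) ω with
  | top =>
    have hL : oneExc d N j ω = ⊤ := by
      rw [oneExc, after, h]
      rfl
    rw [hL]
    simp only [top_le_iff]
    constructor
    · intro h'; exact absurd h' (by simp)
    · rintro ⟨r, _, hchar, _⟩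
      rw [entT_eq_nat.mpr hchar] at h
      simp at h
  | coe r =>
    have hL : oneExc d N j ω = (r : ℕ∞) + exitT (Btl d N j) fun k => ω (k + r) := by
      rw [oneExc, after, h, ENat.recTopCoe_coe]
    rw [hL, enat_coe_add_le_iff]
    have hx : exitT (Btl d N j) (fun k => ω (k + r)) ≤ ((n - r : ℕ) : ℕ∞) ↔
        ∃ m ≤ n - r, ω (m + r) ∉ Btl d N j := by
      rw [exitT, entT_le_nat]
      rfl
    rw [hx]
    constructor
    · rintro ⟨h1, h2⟩
      exact ⟨r, h1, entT_eq_nat.mp h, h2⟩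
    · rintro ⟨r', h1, hchar, m, hm, h3⟩
      have : entT (Bblk d N j) ω = (r' : ℕ∞) := entT_eq_nat.mpr hchar
      rw [h] at this
      have hrr : r = r' := by exact_mod_cast this
      subst hrr
      exact ⟨h1, m, hm, h3⟩

lemma entT_le_of_agree {X : Type*} {U : Set X} {ω ω' : ℕ → X} {n : ℕ}
    (hag : ∀ i ≤ n, ω i = ω' i) (h : entT U ω ≤ (n : ℕ∞)) : entT U ω' ≤ (n : ℕ∞) := by
  obtain ⟨m, hm, hU⟩ := entT_le_nat.mp h
  exact entT_le_nat.mpr ⟨m, hm, by rw [← hag m hm]; exact hU⟩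

lemma oneExc_le_of_agree {d N : ℕ} {j : ℤ} {ω ω' : ℕ → Cyl d N} {n : ℕ}
    (hag : ∀ i ≤ n, ω i = ω' i) (h : oneExc d N j ω ≤ (n : ℕ∞)) :
    oneExc d N j ω' ≤ (n : ℕ∞) := by
  obtain ⟨r, hr, ⟨h1, h2⟩, m, hm, h3⟩ := oneExc_le_nat.mp h
  refine oneExc_le_nat.mpr ⟨r, hr, ⟨?_, fun m' hm' => ?_, ⟩, m, hm, ?_⟩
  · rw [← hag r hr]; exact h1
  · rw [← hag m' (by omega)]; exact h2 m' hm'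
  · rw [← hag (m + r) (by omega)]; exact h3

lemma mem_Btl_of_run {d N : ℕ} {j : ℤ} {ω : ℕ → Cyl d N} {n : ℕ}
    (hR : entT (Bblk d N j) ω ≤ (n : ℕ∞)) (hD : ¬ oneExc d N j ω ≤ (n : ℕ∞)) :
    ω n ∈ Btl d N j := by
  by_contra hc
  apply hD
  cases h : entT (Bblk d N j) ω with
  | top => rw [h] at hR; simp at hR
  | coe r =>
    rw [h] at hR
    have hr : r ≤ n := by exact_mod_cast hR
    refine oneExc_le_nat.mpr ⟨r, hr, entT_eq_nat.mp h, n - r, le_rfl, ?_⟩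
    rwa [Nat.sub_add_cancel hr]

end Infra

section Cylinders

open MeasureTheory

variable {d N : ℕ}

/-- canonical extension of a finite pattern to a full path -/
def ext (n : ℕ) (p : Fin (n + 1) → Cyl d N) : ℕ → Cyl d N :=
  fun k => p ⟨min k n, by omega⟩

lemma ext_le {n : ℕ} (p : Fin (n + 1) → Cyl d N) {k : ℕ} (hk : k ≤ n) :
    ext n p k = p ⟨k, by omega⟩ := by
  unfold ext
  congr 1
  exact Fin.ext (by simp [min_eq_left hk])

lemma ext_fin {n : ℕ} (p : Fin (n + 1) → Cyl d N) (i : Fin (n + 1)) :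
    ext n p (i : ℕ) = p i := by
  rw [ext_le p (Nat.lt_succ_iff.mp i.isLt)]

def cylSet (d N : ℕ) (n : ℕ) (γ : ℕ → Cyl d N) : Set (ℕ → Cyl d N) :=
  {ω | ∀ i ≤ n, ω i = γ i}

lemma measurableSet_cylSet (n : ℕ) (γ : ℕ → Cyl d N) :
    MeasurableSet (cylSet d N n γ) := by
  have : cylSet d N n γ = ⋂ (i : ℕ), ⋂ (_ : i ≤ n), (fun ω : ℕ → Cyl d N => ω i) ⁻¹' {γ i} := by
    ext ω; simp [cylSet]
  rw [this]
  exact MeasurableSet.iInter fun i => MeasurableSet.iInter fun _ =>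
    (measurable_pi_apply i) (cyl_measurableSet {γ i})

lemma iUnion_cylSet (n : ℕ) :
    (⋃ p : Fin (n + 1) → Cyl d N, cylSet d N n (ext n p)) = Set.univ := by
  ext ω
  simp only [Set.mem_iUnion, Set.mem_univ, iff_true]
  refine ⟨fun i => ω i, fun i hi => ?_⟩
  rw [ext_le _ hi]

lemma pairwise_cylSet (n : ℕ) :
    Pairwise (Function.onFun Disjoint fun p : Fin (n + 1) → Cyl d N =>
      cylSet d N n (ext n p)) := by
  intro p q hpq
  rw [Function.onFun, Set.disjoint_left]
  intro ω hp hq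
  apply hpq
  funext i
  have h1 := hp i (Nat.lt_succ_iff.mp i.isLt)
  have h2 := hq i (Nat.lt_succ_iff.mp i.isLt)
  rw [ext_fin] at h1 h2
  rw [← h1, ← h2]

/-- path weight -/
noncomputable def W (d N : ℕ) (x : Cyl d N) (n : ℕ) (γ : ℕ → Cyl d N) : ℝ≥0∞ :=
  (if γ 0 = x then 1 else 0) * ∏ i ∈ Finset.range n, stepProb d N (γ i) (γ (i + 1))

lemma cylSet_measure {Pl : Cyl d N → Measure (ℕ → Cyl d N)} (hP : IsCylRW d N Pl)
    (x : Cyl d N) (n : ℕ) (γ : ℕ → Cyl d N) :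
    Pl x (cylSet d N n γ) = W d N x n γ :=
  hP.2 x n γ

lemma det_measurableSet {n : ℕ} {S : Set (ℕ → Cyl d N)}
    (hS : ∀ ω ω', (∀ i ≤ n, ω i = ω' i) → ω ∈ S → ω' ∈ S) :
    MeasurableSet S := by
  have : S = ⋃ p : Fin (n + 1) → Cyl d N, ⋃ (_ : ext n p ∈ S), cylSet d N n (ext n p) := by
    ext ω
    simp only [Set.mem_iUnion]
    constructor
    · intro hω
      have hag : ∀ i ≤ n, ω i = ext n (fun i : Fin (n+1) => ω i) i := by
        intro i hi; rw [ext_le _ hi]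
      exact ⟨fun i => ω i, hS ω _ hag hω, fun i hi => hag i hi⟩
    · rintro ⟨p, hp, hω⟩
      exact hS (ext n p) ω (fun i hi => (hω i hi).symm) hp
  rw [this]
  exact MeasurableSet.iUnion fun p => MeasurableSet.iUnion fun _ => measurableSet_cylSet n _

lemma lint_det {Pl : Cyl d N → Measure (ℕ → Cyl d N)} (hP : IsCylRW d N Pl)
    (x : Cyl d N) (n : ℕ) {f : (ℕ → Cyl d N) → ℝ≥0∞}
    (hf : ∀ ω ω', (∀ i ≤ n, ω i = ω' i) → f ω = f ω') :
    ∫⁻ ω, f ω ∂(Pl x) = ∑' p : Fin (n + 1) → Cyl d N, f (ext n p) * W d N x n (ext n p) := by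
  conv_lhs => rw [← setLIntegral_univ, ← iUnion_cylSet n]
  rw [lintegral_iUnion (fun p => measurableSet_cylSet n _) (pairwise_cylSet n)]
  apply tsum_congr
  intro p
  have hconst : ∫⁻ ω in cylSet d N n (ext n p), f ω ∂(Pl x)
      = ∫⁻ _ in cylSet d N n (ext n p), f (ext n p) ∂(Pl x) :=
    MeasureTheory.setLIntegral_congr_fun (measurableSet_cylSet n _)
      (fun ω hω => hf ω _ hω)
  rw [hconst, MeasureTheory.setLIntegral_const, cylSet_measure hP]

lemma meas_det {Pl : Cyl d N → Measure (ℕ → Cyl d N)} (hP : IsCylRW d N Pl)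
    (x : Cyl d N) (n : ℕ) {S : Set (ℕ → Cyl d N)}
    (hS : ∀ ω ω', (∀ i ≤ n, ω i = ω' i) → (ω ∈ S ↔ ω' ∈ S)) :
    Pl x S = ∑' p : Fin (n + 1) → Cyl d N,
      (if ext n p ∈ S then W d N x n (ext n p) else 0) := by
  have hmeas : MeasurableSet S := det_measurableSet (fun ω ω' h hω => (hS ω ω' h).mp hω)
  have h1 : Pl x S = ∫⁻ ω, S.indicator 1 ω ∂(Pl x) := (lintegral_indicator_one hmeas).symm
  rw [h1, lint_det hP x n (fun ω ω' h => by
    by_cases hω : ω ∈ S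
    · simp [Set.indicator_of_mem hω, Set.indicator_of_mem ((hS ω ω' h).mp hω)]
    · simp [Set.indicator_of_notMem hω,
        Set.indicator_of_notMem (fun hc => hω ((hS ω ω' h).mpr hc))])]
  apply tsum_congr
  intro p
  by_cases hp : ext n p ∈ S
  · simp [Set.indicator_of_mem hp, if_pos hp]
  · simp [Set.indicator_of_notMem hp, if_neg hp]

/-- group a `(n+2)`-pattern sum as pattern × last-step sum -/
def snocEquivCyl (n : ℕ) : ((Fin (n + 1) → Cyl d N) × Cyl d N) ≃ (Fin (n + 2) → Cyl d N) where
  toFun pc := Fin.snoc pc.1 pc.2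
  invFun q := (Fin.init q, q (Fin.last (n + 1)))
  left_inv pc := by simp [Fin.init_snoc, Fin.snoc_last]
  right_inv q := by simp [Fin.snoc_init_self]

lemma tsum_snoc (n : ℕ) (g : (Fin (n + 2) → Cyl d N) → ℝ≥0∞) :
    ∑' q, g q = ∑' p : Fin (n + 1) → Cyl d N, ∑' w : Cyl d N, g (Fin.snoc p w) := by
  rw [← Equiv.tsum_eq (snocEquivCyl n) g]
  have h1 : ∑' (c : (Fin (n + 1) → Cyl d N) × Cyl d N), g ((snocEquivCyl n) c)
      = ∑' (c : (Fin (n + 1) → Cyl d N) × Cyl d N),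
          (fun p w => g (Fin.snoc p w)) c.1 c.2 := by
    apply tsum_congr; rintro ⟨p, w⟩; rfl
  rw [h1, ENNReal.tsum_prod (f := fun p w => g (Fin.snoc p w))]

lemma ext_snoc_agree (n : ℕ) (p : Fin (n + 1) → Cyl d N) (w : Cyl d N) {i : ℕ} (hi : i ≤ n) :
    ext (n + 1) (Fin.snoc p w) i = ext n p i := by
  rw [ext_le _ (by omega : i ≤ n + 1), ext_le _ hi]
  have : (⟨i, by omega⟩ : Fin (n + 2)) = Fin.castSucc ⟨i, by omega⟩ := rfl
  rw [this, Fin.snoc_castSucc]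

lemma ext_snoc_last (n : ℕ) (p : Fin (n + 1) → Cyl d N) (w : Cyl d N) :
    ext (n + 1) (Fin.snoc p w) (n + 1) = w := by
  rw [ext_le _ le_rfl]
  have : (⟨n + 1, by omega⟩ : Fin (n + 2)) = Fin.last (n + 1) := rfl
  rw [this, Fin.snoc_last]

lemma W_succ (x : Cyl d N) (n : ℕ) (γ : ℕ → Cyl d N) :
    W d N x (n + 1) γ = W d N x n γ * stepProb d N (γ n) (γ (n + 1)) := by
  rw [W, W, Finset.prod_range_succ, mul_assoc]

lemma W_congr (x : Cyl d N) (n : ℕ) {γ γ' : ℕ → Cyl d N} (h : ∀ i ≤ n, γ i = γ' i) :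
    W d N x n γ = W d N x n γ' := by
  rw [W, W, h 0 (by omega)]
  congr 1
  apply Finset.prod_congr rfl
  intro i hi
  rw [Finset.mem_range] at hi
  rw [h i (by omega), h (i+1) (by omega)]

end Cylinders

section Step

variable {d N : ℕ}

lemma unit_inj :
    Function.Injective (fun p : Fin (d + 1) × Bool =>
      (Pi.single p.1 (if p.2 then (1 : ℤ) else -1) : Lat d)) := by
  rintro ⟨i, b⟩ ⟨i', b'⟩ h
  simp only at h
  have hval : ∀ b'' : Bool, (if b'' = true then (1:ℤ) else -1) ≠ 0 := by
    intro b''; cases b'' <;> simp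
  have hii : i = i' := by
    by_contra hne
    have := congrFun h i
    rw [Pi.single_eq_same, Pi.single_eq_of_ne hne] at this
    exact hval b this
  subst hii
  have := congrFun h i
  rw [Pi.single_eq_same, Pi.single_eq_same] at this
  have : b = b' := by cases b <;> cases b' <;> simp_all
  rw [this]

lemma card_unitVecs : (unitVecs d).card = 2 * (d + 1) := by
  rw [unitVecs, Finset.card_image_of_injective _ unit_inj, Finset.card_univ]
  simp [Fintype.card_prod]
  ring

lemma mem_unitVecs {e : Lat d} :
    e ∈ unitVecs d ↔ ∃ i : Fin (d + 1),
      e = Pi.single i (1:ℤ) ∨ e = Pi.single i (-1 : ℤ) := by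
  rw [unitVecs, Finset.mem_image]
  constructor
  · rintro ⟨⟨i, b⟩, _, rfl⟩
    refine ⟨i, ?_⟩
    cases b
    · right; simp
    · left; simp
  · rintro ⟨i, h | h⟩
    · exact ⟨⟨i, true⟩, Finset.mem_univ _, by simp [h]⟩
    · exact ⟨⟨i, false⟩, Finset.mem_univ _, by simp [h]⟩

lemma snd_projE (v : Lat d) : (projE d N v).2 = v (Fin.last d) := rfl

lemma snd_add (a b : Cyl d N) : (a + b).2 = a.2 + b.2 := rfl

lemma unit_last_natAbs {e : Lat d} (he : e ∈ unitVecs d) : (e (Fin.last d)).natAbs ≤ 1 := by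
  obtain ⟨i, h | h⟩ := mem_unitVecs.mp he <;> subst h <;>
  · by_cases hi : Fin.last d = i
    · subst hi; rw [Pi.single_eq_same]; simp
    · rw [Pi.single_eq_of_ne hi]; simp

lemma step_ne_zero {y w : Cyl d N} (hs : stepProb d N y w ≠ 0) :
    ∃ e ∈ unitVecs d, y + projE d N e = w := by
  by_contra hc
  push_neg at hc
  apply hs
  rw [stepProb]
  have hemp : (unitVecs d).filter (fun e => y + projE d N e = w) = ∅ := by
    apply Finset.filter_eq_empty_iff.mpr
    intro e he
    exact hc e he
  rw [hemp]
  simp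

lemma stepProb_translate (t a b : Cyl d N) :
    stepProb d N (a + t) (b + t) = stepProb d N a b := by
  rw [stepProb, stepProb]
  have : (unitVecs d).filter (fun e => a + t + projE d N e = b + t)
      = (unitVecs d).filter (fun e => a + projE d N e = b) := by
    apply Finset.filter_congr
    intro e _
    rw [add_right_comm]
    exact ⟨fun h => by exact add_right_cancel h, fun h => by rw [h]⟩
  rw [this]

lemma step_group (y : Cyl d N) (g : Cyl d N → ℝ≥0∞) :
    ∑' w, stepProb d N y w * g w
      = (∑ e ∈ unitVecs d, g (y + projE d N e)) / (2 * ((d : ℝ≥0∞) + 1)) := by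
  classical
  set T := (unitVecs d).image (fun e => y + projE d N e) with hT
  have hz : ∀ w ∉ T, stepProb d N y w * g w = 0 := by
    intro w hw
    have hemp : (unitVecs d).filter (fun e => y + projE d N e = w) = ∅ := by
      apply Finset.filter_eq_empty_iff.mpr
      intro e he hc
      exact hw (Finset.mem_image.mpr ⟨e, he, hc⟩)
    rw [stepProb, hemp]
    simp
  rw [tsum_eq_sum hz]
  have hterm : ∀ w ∈ T, stepProb d N y w * g w
      = (∑ e ∈ (unitVecs d).filter (fun e => y + projE d N e = w), g (y + projE d N e))
          / (2 * ((d : ℝ≥0∞) + 1)) := by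
    intro w _
    rw [stepProb, div_eq_mul_inv, mul_right_comm, ← div_eq_mul_inv]
    congr 1
    rw [Finset.sum_congr rfl (fun e he => by rw [(Finset.mem_filter.mp he).2]),
      Finset.sum_const, nsmul_eq_mul]
  rw [Finset.sum_congr rfl hterm]
  simp only [div_eq_mul_inv, ← Finset.sum_mul]
  congr 1
  exact Finset.sum_fiberwise_of_maps_to (fun e he => Finset.mem_image_of_mem _ he) _

lemma two_d_ne_zero : (2 * ((d : ℝ≥0∞) + 1)) ≠ 0 := by
  simp

lemma two_d_ne_top : (2 * ((d : ℝ≥0∞) + 1)) ≠ ⊤ := by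
  simp [ENNReal.mul_ne_top, ENNReal.add_ne_top]

lemma step_tsum_one (y : Cyl d N) : ∑' w, stepProb d N y w = 1 := by
  have h1 : ∑' w, stepProb d N y w = ∑' w, stepProb d N y w * (fun _ => (1:ℝ≥0∞)) w := by
    simp
  rw [h1, step_group]
  simp only [Finset.sum_const, nsmul_eq_mul, mul_one, card_unitVecs]
  rw [show (((2 * (d + 1) : ℕ)) : ℝ≥0∞) = 2 * ((d : ℝ≥0∞) + 1) by push_cast; ring]
  exact ENNReal.div_self two_d_ne_zero two_d_ne_top

lemma natAbs_drift (v h : ℤ) :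
    2 * (v - h).natAbs + (if v = h then 2 else 0)
      ≤ (v + 1 - h).natAbs + (v - 1 - h).natAbs := by
  split_ifs <;> omega

lemma sum_unitVecs_natAbs (y : Cyl d N) (h : ℤ) :
    ∑ e ∈ unitVecs d, ((y + projE d N e).2 - h).natAbs
      = 2 * d * (y.2 - h).natAbs
        + ((y.2 + 1 - h).natAbs + (y.2 - 1 - h).natAbs) := by
  have hsnd : ∀ e : Lat d, (y + projE d N e).2 = y.2 + e (Fin.last d) := fun e => rfl
  rw [unitVecs, Finset.sum_image (fun p _ q _ hpq => unit_inj hpq)]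
  rw [Fintype.sum_prod_type]
  rw [Fin.sum_univ_castSucc (f := fun i => ∑ b : Bool,
    ((y + projE d N ((Pi.single i (if b then (1:ℤ) else -1) : Lat d))).2 - h).natAbs)]
  have hcast : ∀ (i : Fin d) (b : Bool),
      ((y + projE d N ((Pi.single i.castSucc (if b then (1:ℤ) else -1) : Lat d))).2 - h).natAbs
        = (y.2 - h).natAbs := by
    intro i b
    rw [hsnd, Pi.single_eq_of_ne (Fin.castSucc_lt_last i).ne', add_zero]
  have hlast : ∀ b : Bool,
      ((y + projE d N ((Pi.single (Fin.last d) (if b then (1:ℤ) else -1) : Lat d))).2 - h).natAbs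
        = (y.2 + (if b then (1:ℤ) else -1) - h).natAbs := by
    intro b
    rw [hsnd, Pi.single_eq_same]
  simp only [hcast, hlast]
  rw [Fintype.sum_bool, Fintype.sum_bool]
  have e1 : (if (true : Bool) then (1:ℤ) else -1) = 1 := by simp
  have e0 : (if (false : Bool) then (1:ℤ) else -1) = -1 := by simp
  rw [e1, e0]
  have e2 : y.2 + -1 - h = y.2 - 1 - h := by ring
  rw [e2, Finset.sum_const, Finset.card_univ, Fintype.card_fin, smul_eq_mul]
  ring

lemma sum_unitVecs_ge (y : Cyl d N) (h : ℤ) :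
    2 * (d + 1) * (y.2 - h).natAbs + (if y.2 = h then 2 else 0)
      ≤ ∑ e ∈ unitVecs d, ((y + projE d N e).2 - h).natAbs := by
  rw [sum_unitVecs_natAbs]
  have hsplit : 2 * (d + 1) * (y.2 - h).natAbs
      = 2 * d * (y.2 - h).natAbs + 2 * (y.2 - h).natAbs := by ring
  rw [hsplit, add_assoc]
  exact Nat.add_le_add_left (natAbs_drift y.2 h) _

lemma step_F (y : Cyl d N) (h : ℤ) :
    ((y.2 - h).natAbs : ℝ≥0∞) + (if y.2 = h then ((d : ℝ≥0∞) + 1)⁻¹ else 0)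
      ≤ ∑' w, stepProb d N y w * (((w.2 - h).natAbs : ℕ) : ℝ≥0∞) := by
  rw [step_group]
  have key : (((2 * (d + 1) * (y.2 - h).natAbs + (if y.2 = h then 2 else 0) : ℕ)) : ℝ≥0∞)
      ≤ ∑ e ∈ unitVecs d, ((((y + projE d N e).2 - h).natAbs : ℕ) : ℝ≥0∞) := by
    rw [← Nat.cast_sum]
    exact_mod_cast Nat.cast_le.mpr (sum_unitVecs_ge y h)
  refine le_trans ?_ (ENNReal.div_le_div_right key _)
  have hpush : (((2 * (d + 1) * (y.2 - h).natAbs + (if y.2 = h then 2 else 0) : ℕ)) : ℝ≥0∞)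
      = 2 * ((d : ℝ≥0∞) + 1) * ((y.2 - h).natAbs : ℝ≥0∞)
          + (if y.2 = h then (2:ℝ≥0∞) else 0) := by
    push_cast
    split_ifs <;> push_cast <;> ring
  rw [hpush, ENNReal.add_div]
  apply add_le_add
  · rw [mul_comm, mul_div_assoc, ENNReal.div_self two_d_ne_zero two_d_ne_top, mul_one]
  · split_ifs with hy
    · rw [div_eq_mul_inv,
        ENNReal.mul_inv (Or.inl (by norm_num)) (Or.inl (by norm_num)),
        ← mul_assoc, ENNReal.mul_inv_cancel (by norm_num) (by norm_num), one_mul]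
    · simp

end Step

section Drift

open MeasureTheory

variable {d N : ℕ} {j h : ℤ}

/-- distance of the vertical coordinate to level `h` -/
noncomputable def Fh (h : ℤ) {d N : ℕ} (y : Cyl d N) : ℝ≥0∞ := ((y.2 - h).natAbs : ℝ≥0∞)

/-- cap value -/
noncomputable def cap (N : ℕ) : ℝ≥0∞ := ((4 * N + 1 : ℕ) : ℝ≥0∞)

/-- the supermartingale-like functional -/
noncomputable def Phi (d N : ℕ) (j h : ℤ) (n : ℕ) (ω : ℕ → Cyl d N) : ℝ≥0∞ :=
  if oneExc d N j ω ≤ (n : ℕ∞) then cap N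
  else if entT (Bblk d N j) ω ≤ (n : ℕ∞) then Fh h (ω n) else 0

/-- level-h visit event strictly before `D` -/
def EvSet (d N : ℕ) (j h : ℤ) (n : ℕ) : Set (ℕ → Cyl d N) :=
  {ω | ¬ oneExc d N j ω ≤ (n : ℕ∞) ∧ (ω n).2 = h}

lemma mem_Bblk_of_snd (hh1 : (j - 1) * (N:ℤ) ≤ h) (hh2 : h ≤ (j + 1) * (N:ℤ))
    {y : Cyl d N} (hy : y.2 = h) : y ∈ Bblk d N j := by
  rw [Bblk]; constructor <;> rw [hy] <;> assumption

lemma natAbs_bound (hh1 : (j - 1) * (N:ℤ) ≤ h) (hh2 : h ≤ (j + 1) * (N:ℤ))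
    {y2 : ℤ} (hy1 : (j - 2) * (N:ℤ) + 1 ≤ y2) (hy2 : y2 ≤ (j + 2) * (N:ℤ) - 1) :
    (y2 - h).natAbs ≤ 3 * N := by
  have e1 : (j - 2) * (N:ℤ) = j * N - 2 * N := by ring
  have e2 : (j + 2) * (N:ℤ) = j * N + 2 * N := by ring
  have e3 : (j - 1) * (N:ℤ) = j * N - N := by ring
  have e4 : (j + 1) * (N:ℤ) = j * N + N := by ring
  rw [e1] at hy1; rw [e2] at hy2; rw [e3] at hh1; rw [e4] at hh2
  generalize j * (N:ℤ) = a at hy1 hy2 hh1 hh2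
  omega

lemma Phi_det (n : ℕ) {ω ω' : ℕ → Cyl d N} (hag : ∀ i ≤ n, ω i = ω' i) :
    Phi d N j h n ω = Phi d N j h n ω' := by
  have hag' : ∀ i ≤ n, ω' i = ω i := fun i hi => (hag i hi).symm
  rw [Phi, Phi]
  by_cases h1 : oneExc d N j ω ≤ (n : ℕ∞)
  · rw [if_pos h1, if_pos (oneExc_le_of_agree hag h1)]
  · rw [if_neg h1, if_neg (fun hc => h1 (oneExc_le_of_agree hag' hc))]
    by_cases h2 : entT (Bblk d N j) ω ≤ (n : ℕ∞)
    · rw [if_pos h2, if_pos (entT_le_of_agree hag h2), hag n le_rfl]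
    · rw [if_neg h2, if_neg (fun hc => h2 (entT_le_of_agree hag' hc))]

lemma EvSet_det (n : ℕ) {ω ω' : ℕ → Cyl d N} (hag : ∀ i ≤ n, ω i = ω' i) :
    ω ∈ EvSet d N j h n ↔ ω' ∈ EvSet d N j h n := by
  have hag' : ∀ i ≤ n, ω' i = ω i := fun i hi => (hag i hi).symm
  unfold EvSet
  rw [Set.mem_setOf_eq, Set.mem_setOf_eq, hag n le_rfl]
  constructor
  · rintro ⟨ha, hb⟩; exact ⟨fun hc => ha (oneExc_le_of_agree hag' hc), hb⟩
  · rintro ⟨ha, hb⟩; exact ⟨fun hc => ha (oneExc_le_of_agree hag hc), hb⟩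

lemma drift (hh1 : (j - 1) * (N:ℤ) ≤ h) (hh2 : h ≤ (j + 1) * (N:ℤ))
    (n : ℕ) (p : Fin (n + 1) → Cyl d N) :
    Phi d N j h n (ext n p)
        + ((d : ℝ≥0∞) + 1)⁻¹ * (EvSet d N j h n).indicator 1 (ext n p)
      ≤ ∑' w : Cyl d N,
          stepProb d N (ext n p n) w * Phi d N j h (n + 1) (ext (n + 1) (Fin.snoc p w)) := by
  set ω := ext n p with hωdef
  set y := ext n p n with hydef
  have hagree : ∀ w : Cyl d N, ∀ i ≤ n, ext (n + 1) (Fin.snoc p w) i = ω i :=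
    fun w i hi => ext_snoc_agree n p w hi
  have hagree' : ∀ w : Cyl d N, ∀ i ≤ n, ω i = ext (n + 1) (Fin.snoc p w) i :=
    fun w i hi => (hagree w i hi).symm
  by_cases hD : oneExc d N j ω ≤ (n : ℕ∞)
  · have hInd : (EvSet d N j h n).indicator (1 : (ℕ → Cyl d N) → ℝ≥0∞) ω = 0 :=
      Set.indicator_of_notMem (fun hc : ω ∈ EvSet d N j h n => hc.1 hD) _
    have hPhi : Phi d N j h n ω = cap N := if_pos hD
    have hRHS : ∀ w, Phi d N j h (n + 1) (ext (n + 1) (Fin.snoc p w)) = cap N := by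
      intro w
      have : oneExc d N j (ext (n + 1) (Fin.snoc p w)) ≤ ((n : ℕ) : ℕ∞) :=
        oneExc_le_of_agree (hagree' w) hD
      exact if_pos (le_trans this (by exact_mod_cast Nat.cast_le.mpr (Nat.le_succ n)))
    rw [hPhi, hInd, mul_zero, add_zero]
    apply le_of_eq
    calc cap N = cap N * ∑' w, stepProb d N y w := by rw [step_tsum_one, mul_one]
    _ = ∑' w, cap N * stepProb d N y w := ENNReal.tsum_mul_left.symm
    _ = ∑' w, stepProb d N y w * Phi d N j h (n + 1) (ext (n + 1) (Fin.snoc p w)) := by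
        apply tsum_congr; intro w; rw [hRHS w, mul_comm]
  · by_cases hR : entT (Bblk d N j) ω ≤ (n : ℕ∞)
    · -- main case: in the middle of the excursion
      have hyBtl : y ∈ Btl d N j := mem_Btl_of_run hR hD
      have hyabs : (y.2 - h).natAbs ≤ 3 * N := natAbs_bound hh1 hh2 hyBtl.1 hyBtl.2
      have hterm : ∀ w, stepProb d N y w * Fh h w
          ≤ stepProb d N y w * Phi d N j h (n + 1) (ext (n + 1) (Fin.snoc p w)) := by
        intro w
        rcases eq_or_ne (stepProb d N y w) 0 with hz | hz
        · rw [hz, zero_mul, zero_mul]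
        · obtain ⟨e, he, hwe⟩ := step_ne_zero hz
          have hw2 : (w.2 - y.2).natAbs ≤ 1 := by
            rw [← hwe, snd_add, snd_projE, add_sub_cancel_left]
            exact unit_last_natAbs he
          have hwabs : (w.2 - h).natAbs ≤ 4 * N + 1 := by omega
          apply mul_le_mul_right
          rw [Phi]
          split_ifs with hD' hR'
          · exact le_trans (Nat.cast_le.mpr hwabs) (le_refl (cap N))
          · rw [ext_snoc_last]
          · exfalso
            apply hR'
            refine le_trans (entT_le_of_agree (hagree' w) hR) ?_
            exact_mod_cast Nat.cast_le.mpr (Nat.le_succ n)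
      have hLHS : Phi d N j h n ω
            + ((d : ℝ≥0∞) + 1)⁻¹ * (EvSet d N j h n).indicator 1 ω
          = Fh h y + (if y.2 = h then ((d : ℝ≥0∞) + 1)⁻¹ else 0) := by
        rw [Phi, if_neg hD, if_pos hR]
        congr 1
        by_cases hyh : y.2 = h
        · rw [if_pos hyh, Set.indicator_of_mem (show ω ∈ EvSet d N j h n from ⟨hD, hyh⟩), Pi.one_apply, mul_one]
        · rw [if_neg hyh, Set.indicator_of_notMem (fun hc : ω ∈ EvSet d N j h n => hyh hc.2), mul_zero]
      rw [hLHS]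
      exact le_trans (step_F y h) (ENNReal.tsum_le_tsum hterm)
    · -- before the first entrance
      have hInd : (EvSet d N j h n).indicator (1 : (ℕ → Cyl d N) → ℝ≥0∞) ω = 0 := by
        apply Set.indicator_of_notMem
        rintro (⟨-, hyh⟩ : ω ∈ EvSet d N j h n)
        exact hR (entT_le_nat.mpr ⟨n, le_rfl, mem_Bblk_of_snd hh1 hh2 hyh⟩)
      have hPhi : Phi d N j h n ω = 0 := by rw [Phi, if_neg hD, if_neg hR]
      rw [hPhi, hInd, mul_zero, add_zero]
      exact zero_le

end Drift

section Excursion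

open MeasureTheory

variable {d N : ℕ} {j h : ℤ} {Pl : Cyl d N → Measure (ℕ → Cyl d N)}

lemma Phi_le_cap (hh1 : (j - 1) * (N:ℤ) ≤ h) (hh2 : h ≤ (j + 1) * (N:ℤ))
    (n : ℕ) (ω : ℕ → Cyl d N) : Phi d N j h n ω ≤ cap N := by
  rw [Phi]
  split_ifs with h1 h2
  · exact le_rfl
  · have hm := mem_Btl_of_run h2 h1
    exact Nat.cast_le.mpr (le_trans (natAbs_bound hh1 hh2 hm.1 hm.2) (by omega))
  · exact zero_le

lemma lint_Phi_le (hP : IsCylRW d N Pl) (hh1 : (j - 1) * (N:ℤ) ≤ h)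
    (hh2 : h ≤ (j + 1) * (N:ℤ)) (x : Cyl d N) (n : ℕ) :
    ∫⁻ ω, Phi d N j h n ω ∂(Pl x) ≤ cap N := by
  have : IsProbabilityMeasure (Pl x) := hP.1 x
  calc ∫⁻ ω, Phi d N j h n ω ∂(Pl x) ≤ ∫⁻ _, cap N ∂(Pl x) :=
        lintegral_mono (fun ω => Phi_le_cap hh1 hh2 n ω)
  _ = cap N := by rw [lintegral_const, measure_univ, mul_one]

lemma step_ineq (hP : IsCylRW d N Pl) (hh1 : (j - 1) * (N:ℤ) ≤ h)
    (hh2 : h ≤ (j + 1) * (N:ℤ)) (x : Cyl d N) (n : ℕ) :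
    ∫⁻ ω, Phi d N j h n ω ∂(Pl x) + ((d : ℝ≥0∞) + 1)⁻¹ * Pl x (EvSet d N j h n)
      ≤ ∫⁻ ω, Phi d N j h (n + 1) ω ∂(Pl x) := by
  rw [lint_det hP x n (fun ω ω' hag => Phi_det n hag),
      lint_det hP x (n + 1) (fun ω ω' hag => Phi_det (n + 1) hag),
      meas_det hP x n (fun ω ω' hag => EvSet_det n hag),
      ← ENNReal.tsum_mul_left, ← ENNReal.tsum_add,
      tsum_snoc n (fun q => Phi d N j h (n + 1) (ext (n + 1) q) * W d N x (n + 1) (ext (n + 1) q))]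
  apply ENNReal.tsum_le_tsum
  intro p
  have hWs : ∀ w, W d N x (n + 1) (ext (n + 1) (Fin.snoc p w))
      = W d N x n (ext n p) * stepProb d N (ext n p n) w := by
    intro w
    rw [W_succ, ext_snoc_last, ext_snoc_agree n p w le_rfl,
        W_congr x n (fun i hi => ext_snoc_agree n p w hi)]
  have hRHS : ∑' w, Phi d N j h (n + 1) (ext (n + 1) (Fin.snoc p w))
        * W d N x (n + 1) (ext (n + 1) (Fin.snoc p w))
      = W d N x n (ext n p) * ∑' w, stepProb d N (ext n p n) w
          * Phi d N j h (n + 1) (ext (n + 1) (Fin.snoc p w)) := by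
    rw [← ENNReal.tsum_mul_left]
    apply tsum_congr
    intro w
    rw [hWs w]
    ring
  rw [hRHS]
  have hLHS : Phi d N j h n (ext n p) * W d N x n (ext n p)
      + ((d : ℝ≥0∞) + 1)⁻¹ * (if ext n p ∈ EvSet d N j h n then W d N x n (ext n p) else 0)
      = (Phi d N j h n (ext n p)
          + ((d : ℝ≥0∞) + 1)⁻¹ * (EvSet d N j h n).indicator 1 (ext n p))
            * W d N x n (ext n p) := by
    by_cases hp : ext n p ∈ EvSet d N j h n
    · rw [if_pos hp, Set.indicator_of_mem hp, Pi.one_apply]; ring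
    · rw [if_neg hp, Set.indicator_of_notMem hp]; ring
  rw [hLHS, mul_comm]
  exact mul_le_mul_right (drift hh1 hh2 n p) _

lemma telescope (hP : IsCylRW d N Pl) (hh1 : (j - 1) * (N:ℤ) ≤ h)
    (hh2 : h ≤ (j + 1) * (N:ℤ)) (x : Cyl d N) (K : ℕ) :
    ((d : ℝ≥0∞) + 1)⁻¹ * ∑ n ∈ Finset.range K, Pl x (EvSet d N j h n) ≤ cap N := by
  have main : ∀ K : ℕ, ∫⁻ ω, Phi d N j h 0 ω ∂(Pl x)
      + ((d : ℝ≥0∞) + 1)⁻¹ * ∑ n ∈ Finset.range K, Pl x (EvSet d N j h n)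
      ≤ ∫⁻ ω, Phi d N j h K ω ∂(Pl x) := by
    intro K
    induction K with
    | zero => simp
    | succ K ih =>
      rw [Finset.sum_range_succ, mul_add, ← add_assoc]
      exact le_trans (add_le_add_left ih _) (step_ineq hP hh1 hh2 x K)
  exact le_trans (le_trans le_add_self (main K)) (lint_Phi_le hP hh1 hh2 x K)

lemma tsum_Ev_le (hP : IsCylRW d N Pl) (hh1 : (j - 1) * (N:ℤ) ≤ h)
    (hh2 : h ≤ (j + 1) * (N:ℤ)) (x : Cyl d N) :
    ∑' n : ℕ, Pl x (EvSet d N j h n) ≤ ((d : ℝ≥0∞) + 1) * cap N := by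
  have hd0 : ((d : ℝ≥0∞) + 1) ≠ 0 := by simp
  have hdt : ((d : ℝ≥0∞) + 1) ≠ ⊤ := by simp
  have h1 : ((d : ℝ≥0∞) + 1)⁻¹ * ∑' n : ℕ, Pl x (EvSet d N j h n) ≤ cap N := by
    rw [← ENNReal.tsum_mul_left]
    apply ENNReal.tsum_le_of_sum_range_le
    intro K
    rw [← Finset.mul_sum]
    exact telescope hP hh1 hh2 x K
  calc ∑' n : ℕ, Pl x (EvSet d N j h n)
      = (((d : ℝ≥0∞) + 1) * ((d : ℝ≥0∞) + 1)⁻¹) * ∑' n : ℕ, Pl x (EvSet d N j h n) := by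
        rw [ENNReal.mul_inv_cancel hd0 hdt, one_mul]
  _ = ((d : ℝ≥0∞) + 1) * (((d : ℝ≥0∞) + 1)⁻¹ * ∑' n : ℕ, Pl x (EvSet d N j h n)) := by
        ring
  _ ≤ ((d : ℝ≥0∞) + 1) * cap N := mul_le_mul_right h1 _

end Excursion

section Translate

open MeasureTheory

variable {d N : ℕ} {j : ℤ} {Pl : Cyl d N → Measure (ℕ → Cyl d N)}

/-- the event: at time `n` we are at `a`, strictly before `D` -/
def ESet (d N : ℕ) (j : ℤ) (n : ℕ) (a : Cyl d N) : Set (ℕ → Cyl d N) :=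
  {ω | ¬ oneExc d N j ω ≤ (n : ℕ∞) ∧ ω n = a}

lemma ESet_det {n : ℕ} {a : Cyl d N} {ω ω' : ℕ → Cyl d N} (hag : ∀ i ≤ n, ω i = ω' i) :
    ω ∈ ESet d N j n a ↔ ω' ∈ ESet d N j n a := by
  have hag' : ∀ i ≤ n, ω' i = ω i := fun i hi => (hag i hi).symm
  unfold ESet
  rw [Set.mem_setOf_eq, Set.mem_setOf_eq, hag n le_rfl]
  constructor
  · rintro ⟨ha, hb⟩; exact ⟨fun hc => ha (oneExc_le_of_agree hag' hc), hb⟩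
  · rintro ⟨ha, hb⟩; exact ⟨fun hc => ha (oneExc_le_of_agree hag hc), hb⟩

lemma oneExc_translate (t : Cyl d N) (ht : t.2 = 0) (ω : ℕ → Cyl d N) :
    oneExc d N j (fun k => ω k + t) = oneExc d N j ω := by
  have hB : ∀ z : Cyl d N, z + t ∈ Bblk d N j ↔ z ∈ Bblk d N j := by
    intro z; simp [Bblk, snd_add, ht]
  have hE : ∀ ω' : ℕ → Cyl d N,
      entT (Bblk d N j) (fun k => ω' k + t) = entT (Bblk d N j) ω' := by
    intro ω'
    rw [entT, entT]
    congr 1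
    ext s
    simp only [Set.mem_setOf_eq]
    constructor
    · rintro ⟨m, hm, rfl⟩; exact ⟨m, (hB _).mp hm, rfl⟩
    · rintro ⟨m, hm, rfl⟩; exact ⟨m, (hB _).mpr hm, rfl⟩
  have hX : ∀ ω' : ℕ → Cyl d N,
      exitT (Btl d N j) (fun k => ω' k + t) = exitT (Btl d N j) ω' := by
    intro ω'
    rw [exitT, exitT, entT, entT]
    congr 1
    ext s
    simp only [Set.mem_setOf_eq]
    have hT : ∀ z : Cyl d N, z + t ∈ (Btl d N j)ᶜ ↔ z ∈ (Btl d N j)ᶜ := by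
      intro z; simp [Btl, snd_add, ht]
    constructor
    · rintro ⟨m, hm, rfl⟩; exact ⟨m, (hT _).mp hm, rfl⟩
    · rintro ⟨m, hm, rfl⟩; exact ⟨m, (hT _).mpr hm, rfl⟩
  rw [oneExc, oneExc, after, after, hE]
  cases hr : entT (Bblk d N j) ω with
  | top => rfl
  | coe r =>
    rw [ENat.recTopCoe_coe, ENat.recTopCoe_coe]
    congr 1
    exact hX (fun k => ω (k + r))

lemma W_translate (x t : Cyl d N) (n : ℕ) (γ : ℕ → Cyl d N) :
    W d N x n (fun k => γ k + t) = W d N (x - t) n γ := by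
  rw [W, W]
  congr 1
  · have hcond : (γ 0 + t = x) ↔ (γ 0 = x - t) := eq_sub_iff_add_eq.symm
    by_cases hc : γ 0 + t = x
    · rw [if_pos hc, if_pos (hcond.mp hc)]
    · rw [if_neg hc, if_neg (fun h' => hc (hcond.mpr h'))]
  · exact Finset.prod_congr rfl fun i _ => stepProb_translate t (γ i) (γ (i + 1))

lemma Pl_ESet_translate (hP : IsCylRW d N Pl) (x t a : Cyl d N) (ht : t.2 = 0) (n : ℕ) :
    Pl x (ESet d N j n (a + t)) = Pl (x - t) (ESet d N j n a) := by
  rw [meas_det hP x n (fun ω ω' hag => ESet_det hag),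
      meas_det hP (x - t) n (fun ω ω' hag => ESet_det hag),
      ← Equiv.tsum_eq (Equiv.addRight (fun _ : Fin (n + 1) => t))
        (fun p => if ext n p ∈ ESet d N j n (a + t) then W d N x n (ext n p) else 0)]
  apply tsum_congr
  intro p
  have hep : (Equiv.addRight (fun _ : Fin (n + 1) => t)) p = p + fun _ => t := rfl
  rw [hep]
  have hfun : ext n (p + fun _ => t) = fun k => ext n p k + t := rfl
  rw [hfun]
  have hmem : (fun k => ext n p k + t) ∈ ESet d N j n (a + t) ↔ ext n p ∈ ESet d N j n a := by
    unfold ESet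
    rw [Set.mem_setOf_eq, Set.mem_setOf_eq, oneExc_translate t ht]
    constructor
    · rintro ⟨ha, hb⟩; exact ⟨ha, add_right_cancel hb⟩
    · rintro ⟨ha, hb⟩
      refine ⟨ha, ?_⟩
      show ext n p n + t = a + t
      rw [hb]
  rw [W_translate x t n (ext n p)]
  by_cases hm : ext n p ∈ ESet d N j n a
  · rw [if_pos (hmem.mpr hm), if_pos hm]
  · rw [if_neg (fun hc => hm (hmem.mp hc)), if_neg hm]

lemma lawP_apply (Pl : Cyl d N → Measure (ℕ → Cyl d N)) {S : Set (ℕ → Cyl d N)}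
    (hS : MeasurableSet S) :
    lawP d N Pl S = ((N : ℝ≥0∞) ^ d * (2 * N + 1))⁻¹
      * ∑' x : Cyl d N, (if x ∈ Bblk d N 0 then Pl x S else 0) := by
  rw [lawP, Measure.smul_apply, Measure.sum_apply _ hS, smul_eq_mul]
  congr 1
  apply tsum_congr
  intro x
  by_cases hx : x ∈ Bblk d N 0 <;> simp [hx]

lemma measurableSet_ESet (n : ℕ) (a : Cyl d N) : MeasurableSet (ESet d N j n a) :=
  det_measurableSet (n := n) (fun ω ω' hag hm => (ESet_det hag).mp hm)

lemma measurableSet_EvSet (h : ℤ) (n : ℕ) : MeasurableSet (EvSet d N j h n) :=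
  det_measurableSet (n := n) (fun ω ω' hag hm => (EvSet_det n hag).mp hm)

lemma lawP_ESet_translate (hP : IsCylRW d N Pl) (t a : Cyl d N) (ht : t.2 = 0) (n : ℕ) :
    lawP d N Pl (ESet d N j n (a + t)) = lawP d N Pl (ESet d N j n a) := by
  rw [lawP_apply Pl (measurableSet_ESet n (a + t)), lawP_apply Pl (measurableSet_ESet n a)]
  congr 1
  rw [← Equiv.tsum_eq (Equiv.addRight t)
    (fun x => if x ∈ Bblk d N 0 then Pl x (ESet d N j n (a + t)) else 0)]
  apply tsum_congr
  intro x
  have hex : (Equiv.addRight t) x = x + t := rfl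
  rw [hex]
  have hmem : x + t ∈ Bblk d N 0 ↔ x ∈ Bblk d N 0 := by
    simp [Bblk, snd_add, ht]
  by_cases hx : x ∈ Bblk d N 0
  · rw [if_pos (hmem.mpr hx), if_pos hx, Pl_ESet_translate hP (x + t) t a ht n,
      add_sub_cancel_right]
  · rw [if_neg (fun hc => hx (hmem.mp hc)), if_neg hx]

lemma fiber (hP : IsCylRW d N Pl) (hN : 0 < N) (a : Cyl d N) (n : ℕ) :
    lawP d N Pl (EvSet d N j a.2 n) = ((N ^ d : ℕ) : ℝ≥0∞) * lawP d N Pl (ESet d N j n a) := by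
  haveI : NeZero N := ⟨by omega⟩
  have hdecomp : EvSet d N j a.2 n = ⋃ u : Fin d → ZMod N, ESet d N j n (u, a.2) := by
    ext ω
    simp only [Set.mem_iUnion, EvSet, ESet, Set.mem_setOf_eq]
    constructor
    · rintro ⟨hD, hsnd⟩
      refine ⟨(ω n).1, hD, ?_⟩
      have : ω n = ((ω n).1, (ω n).2) := rfl
      rw [this, hsnd]
    · rintro ⟨u, hD, heq⟩
      exact ⟨hD, by rw [heq]⟩
  rw [hdecomp, measure_iUnion ?_ (fun u => measurableSet_ESet n _)]
  · have hval : ∀ u : Fin d → ZMod N,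
        lawP d N Pl (ESet d N j n (u, a.2)) = lawP d N Pl (ESet d N j n a) := by
      intro u
      have heq : ((u, a.2) : Cyl d N) = a + ((u - a.1, 0) : Cyl d N) := by
        have h1 : u = a.1 + (u - a.1) := by ring
        have h2 : a.2 = a.2 + 0 := by ring
        rw [Prod.ext_iff]
        exact ⟨h1, h2⟩
      rw [heq, lawP_ESet_translate hP _ a rfl n]
    rw [tsum_congr hval, tsum_eq_sum (s := (Finset.univ : Finset (Fin d → ZMod N))) (by simp),
      Finset.sum_const, Finset.card_univ, nsmul_eq_mul]
    rw [Fintype.card_fun, ZMod.card, Fintype.card_fin]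
  · intro u u' huu
    rw [Function.onFun, Set.disjoint_left]
    rintro ω ⟨-, h1⟩ ⟨-, h2⟩
    apply huu
    rw [h1] at h2
    exact (((Prod.mk.injEq _ _ _ _).mp h2.symm).1).symm

lemma tsum_B0 (hN : 0 < N) (c : ℝ≥0∞) :
    ∑' x : Cyl d N, (if x ∈ Bblk d N 0 then c else 0)
      = ((N ^ d * (2 * N + 1) : ℕ) : ℝ≥0∞) * c := by
  classical
  haveI : NeZero N := ⟨by omega⟩
  set Bfin : Finset (Cyl d N) :=
    (Finset.univ : Finset (Fin d → ZMod N)) ×ˢ Finset.Icc (-(N:ℤ)) N with hBfin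
  have hmem : ∀ x : Cyl d N, x ∈ Bblk d N 0 ↔ x ∈ Bfin := by
    intro x
    rw [hBfin, Finset.mem_product, Finset.mem_Icc]
    unfold Bblk
    rw [Set.mem_setOf_eq]
    constructor
    · rintro ⟨h1, h2⟩
      refine ⟨Finset.mem_univ _, by linarith [h1], by linarith [h2]⟩
    · rintro ⟨-, h1, h2⟩
      constructor <;> linarith
  rw [tsum_eq_sum (s := Bfin) (fun x hx => if_neg (fun hc => hx ((hmem x).mp hc)))]
  rw [Finset.sum_congr rfl (fun x hx => if_pos ((hmem x).mpr hx)), Finset.sum_const,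
    Finset.card_product, Finset.card_univ, Fintype.card_fun, ZMod.card, Fintype.card_fin,
    Int.card_Icc]
  have h2 : ((N:ℤ) + 1 - -(N:ℤ)).toNat = 2 * N + 1 := by omega
  rw [h2, nsmul_eq_mul]

end Translate



section Final

open MeasureTheory

variable {d N : ℕ} {j : ℤ} {Pl : Cyl d N → Measure (ℕ → Cyl d N)}

lemma tsum_lawP_Ev_le (hP : IsCylRW d N Pl) {h : ℤ} (hh1 : (j - 1) * (N:ℤ) ≤ h)
    (hh2 : h ≤ (j + 1) * (N:ℤ)) (hN : 0 < N) :
    ∑' n : ℕ, lawP d N Pl (EvSet d N j h n) ≤ ((d : ℝ≥0∞) + 1) * cap N := by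
  set K : ℝ≥0∞ := ((N : ℝ≥0∞) ^ d * (2 * N + 1)) with hK
  have hKcast : K = ((N ^ d * (2 * N + 1) : ℕ) : ℝ≥0∞) := by rw [hK]; push_cast; ring
  have hK0 : K ≠ 0 := by
    rw [hKcast]
    exact Nat.cast_ne_zero.mpr (by positivity)
  have hKt : K ≠ ⊤ := by rw [hKcast]; exact ENNReal.natCast_ne_top _
  calc ∑' n : ℕ, lawP d N Pl (EvSet d N j h n)
      = ∑' n : ℕ, K⁻¹ * ∑' x : Cyl d N,
          (if x ∈ Bblk d N 0 then Pl x (EvSet d N j h n) else 0) := by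
        apply tsum_congr; intro n; rw [lawP_apply Pl (measurableSet_EvSet h n)]
  _ = K⁻¹ * ∑' x : Cyl d N, ∑' n : ℕ,
          (if x ∈ Bblk d N 0 then Pl x (EvSet d N j h n) else 0) := by
        rw [ENNReal.tsum_mul_left, ENNReal.tsum_comm]
  _ ≤ K⁻¹ * ∑' x : Cyl d N, (if x ∈ Bblk d N 0 then ((d : ℝ≥0∞) + 1) * cap N else 0) := by
        apply mul_le_mul_right
        apply ENNReal.tsum_le_tsum
        intro x
        by_cases hx : x ∈ Bblk d N 0
        · simp only [if_pos hx]
          exact tsum_Ev_le hP hh1 hh2 x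
        · simp [hx]
  _ = K⁻¹ * (((N ^ d * (2 * N + 1) : ℕ) : ℝ≥0∞) * (((d : ℝ≥0∞) + 1) * cap N)) := by
        rw [tsum_B0 hN]
  _ = ((d : ℝ≥0∞) + 1) * cap N := by
        rw [← hKcast, ← mul_assoc, ENNReal.inv_mul_cancel hK0 hKt, one_mul]

end Final

/-- **(1.20).** For `d ≥ 3` there is a constant `c` depending only on `d` such that for
all `N ≥ 2`, all `j ∈ ℤ` and every nonempty `A ⊆ C_j`,
`P[H_A < D^j_1] ≤ c |A| / N^{d-1}`. -/
theorem statement_13 (d : ℕ) (hd : 3 ≤ d) :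
    ∃ c : ℝ, 0 < c ∧
      ∀ N : ℕ, 2 ≤ N → ∀ Pl : Cyl d N → Measure (ℕ → Cyl d N), IsCylRW d N Pl →
      ∀ j : ℤ, ∀ A : Finset (Cyl d N), A.Nonempty → (↑A : Set (Cyl d N)) ⊆ Cblk d N j →
        ((lawP d N Pl) {ω | entT (↑A : Set (Cyl d N)) ω < DD d N j 1 ω}).toReal
          ≤ c * A.card / (N : ℝ) ^ (d - 1) := by
  refine ⟨5 * ((d:ℝ) + 1), by positivity, ?_⟩
  intro N hN Pl hP j A hA hAC
  have hNpos : 0 < N := by omega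
  have hp0 : (((N ^ d : ℕ) : ℝ≥0∞)) ≠ 0 := Nat.cast_ne_zero.mpr (by positivity)
  have hpt : (((N ^ d : ℕ) : ℝ≥0∞)) ≠ ⊤ := ENNReal.natCast_ne_top _
  -- inclusion into the union of position events
  have hsub : {ω : ℕ → Cyl d N | entT (↑A : Set (Cyl d N)) ω < DD d N j 1 ω}
      ⊆ ⋃ n : ℕ, ⋃ a ∈ A, ESet d N j n a := by
    intro ω hω
    rw [Set.mem_setOf_eq, DD_one] at hω
    cases hE : entT (↑A : Set (Cyl d N)) ω with
    | top => rw [hE] at hω; exact absurd hω (by simp)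
    | coe n =>
      rw [hE] at hω
      have hmem := (entT_eq_nat.mp hE).1
      exact Set.mem_iUnion.mpr ⟨n, Set.mem_iUnion₂.mpr ⟨ω n, hmem, ⟨not_le.mpr hω, rfl⟩⟩⟩
  -- vertical bounds for points of A
  have hbd : ∀ a ∈ A, (j - 1) * (N:ℤ) ≤ a.2 ∧ a.2 ≤ (j + 1) * (N:ℤ) := by
    intro a ha
    have hc := hAC ha
    rw [Cblk, Set.mem_setOf_eq] at hc
    have hNR : (0:ℝ) ≤ (N:ℝ) := Nat.cast_nonneg N
    constructor
    · have h1 : ((j:ℝ) - 1) * N ≤ ((j:ℝ) - 3/4) * N := by nlinarith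
      have h2 : (((j - 1) * (N:ℤ) : ℤ) : ℝ) ≤ (a.2 : ℝ) := by
        push_cast
        linarith [hc.1]
      exact_mod_cast h2
    · have h1 : ((j:ℝ) + 3/4) * N ≤ ((j:ℝ) + 1) * N := by nlinarith
      have h2 : (a.2 : ℝ) ≤ (((j + 1) * (N:ℤ) : ℤ) : ℝ) := by
        push_cast
        linarith [hc.2]
      exact_mod_cast h2
  -- the ENNReal bound
  have hmain : lawP d N Pl {ω : ℕ → Cyl d N | entT (↑A : Set (Cyl d N)) ω < DD d N j 1 ω}
      ≤ (A.card : ℝ≥0∞) * ((((N ^ d : ℕ) : ℝ≥0∞))⁻¹ * (((d : ℝ≥0∞) + 1) * cap N)) := by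
    calc lawP d N Pl {ω : ℕ → Cyl d N | entT (↑A : Set (Cyl d N)) ω < DD d N j 1 ω}
        ≤ lawP d N Pl (⋃ n : ℕ, ⋃ a ∈ A, ESet d N j n a) := measure_mono hsub
    _ ≤ ∑' n : ℕ, lawP d N Pl (⋃ a ∈ A, ESet d N j n a) := measure_iUnion_le _
    _ ≤ ∑' n : ℕ, ∑ a ∈ A, lawP d N Pl (ESet d N j n a) :=
        ENNReal.tsum_le_tsum fun n => measure_biUnion_finset_le A _
    _ = ∑ a ∈ A, ∑' n : ℕ, lawP d N Pl (ESet d N j n a) :=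
        Summable.tsum_finsetSum fun a _ => ENNReal.summable
    _ ≤ ∑ a ∈ A, (((N ^ d : ℕ) : ℝ≥0∞))⁻¹ * (((d : ℝ≥0∞) + 1) * cap N) := by
        apply Finset.sum_le_sum
        intro a ha
        have hfib : ∀ n : ℕ, lawP d N Pl (ESet d N j n a)
            = (((N ^ d : ℕ) : ℝ≥0∞))⁻¹ * lawP d N Pl (EvSet d N j a.2 n) := by
          intro n
          rw [fiber hP hNpos a n, ← mul_assoc, ENNReal.inv_mul_cancel hp0 hpt, one_mul]
        rw [tsum_congr hfib, ENNReal.tsum_mul_left]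
        exact mul_le_mul_right (tsum_lawP_Ev_le hP (hbd a ha).1 (hbd a ha).2 hNpos) _
    _ = (A.card : ℝ≥0∞) * ((((N ^ d : ℕ) : ℝ≥0∞))⁻¹ * (((d : ℝ≥0∞) + 1) * cap N)) := by
        rw [Finset.sum_const, nsmul_eq_mul]
  -- pass to real numbers
  have hcapeq : ((d : ℝ≥0∞) + 1) * cap N = (((d + 1) * (4 * N + 1) : ℕ) : ℝ≥0∞) := by
    rw [cap]; push_cast; ring
  have hBne : (A.card : ℝ≥0∞) * ((((N ^ d : ℕ) : ℝ≥0∞))⁻¹ * (((d : ℝ≥0∞) + 1) * cap N)) ≠ ⊤ := by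
    rw [hcapeq]
    exact ENNReal.mul_ne_top (ENNReal.natCast_ne_top _)
      (ENNReal.mul_ne_top (ENNReal.inv_ne_top.mpr hp0) (ENNReal.natCast_ne_top _))
  have htr := ENNReal.toReal_mono hBne hmain
  refine le_trans htr ?_
  rw [hcapeq, ENNReal.toReal_mul, ENNReal.toReal_mul, ENNReal.toReal_inv,
    ENNReal.toReal_natCast, ENNReal.toReal_natCast, ENNReal.toReal_natCast]
  -- now a real-number inequality
  have hN2 : (2:ℝ) ≤ (N:ℝ) := by exact_mod_cast hN
  have hN0 : (0:ℝ) < (N:ℝ) := by linarith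
  have hpow : (N:ℝ) ^ d = (N:ℝ) ^ (d - 1) * N := by
    rw [← pow_succ]
    congr 1
    omega
  have hpp : (0:ℝ) < (N:ℝ) ^ (d - 1) := by positivity
  have hcast : ((N ^ d : ℕ) : ℝ) = (N:ℝ) ^ d := by push_cast; ring
  rw [hcast, div_eq_mul_inv, hpow, mul_inv]
  have hstep : (N:ℝ)⁻¹ * (((d + 1) * (4 * N + 1) : ℕ) : ℝ)
      ≤ 5 * ((d:ℝ) + 1) := by
    rw [inv_mul_le_iff₀ hN0]
    push_cast
    nlinarith
  calc (A.card : ℝ) * (((N:ℝ) ^ (d - 1))⁻¹ * (N:ℝ)⁻¹ * (((d + 1) * (4 * N + 1) : ℕ) : ℝ))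
      = (A.card : ℝ) * ((N:ℝ) ^ (d - 1))⁻¹ * ((N:ℝ)⁻¹ * (((d + 1) * (4 * N + 1) : ℕ) : ℝ)) := by
        ring
  _ ≤ (A.card : ℝ) * ((N:ℝ) ^ (d - 1))⁻¹ * (5 * ((d:ℝ) + 1)) := by
        apply mul_le_mul_of_nonneg_left hstep
        positivity
  _ = 5 * ((d:ℝ) + 1) * (A.card : ℝ) * ((N:ℝ) ^ (d - 1))⁻¹ := by ring

end DiscCyl
end
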